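/- arXiv:2410.04544 — 9 statements merged into one kernel-verified Lean document; each statement's English description precedes it below -/
import Mathlib

section
/- Let P be a finite set of points in the plane in general position (no three collinear), and let (t, u, v) be three consecutive vertices in clockwise order on the convex hull of P. Then every point of P that becomes a vertex of the convex hull of P \ {u} but was not a vertex of the convex hull of P lies inside the triangle with vertices t, u, v. -/
open Set MeasureTheory

noncomputable section

abbrev Pt := EuclideanSpace ℝ (Fin 2)

/-- General position: no three distinct points of `S` are collinear. -/
def GenPos (S : Set Pt) : Prop :=
  ∀ p q r : Pt, p ∈ S → q ∈ S → r ∈ S → p ≠ q → q ≠ r → p ≠ r →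
    ¬ Collinear ℝ ({p, q, r} : Set Pt)

/-- `p` is a vertex (extreme point) of the convex hull of `S`. -/
def IsHullVertex (S : Set Pt) (p : Pt) : Prop :=
  p ∈ S ∧ p ∉ convexHull ℝ (S \ {p})

/-- `p` is active for the hull vertex `u` of `S`: it is a vertex of
`CH(S \ {u})` but not a vertex of `CH(S)`. -/
def ActiveFor (S : Set Pt) (u p : Pt) : Prop :=
  IsHullVertex (S \ {u}) p ∧ ¬ IsHullVertex S p

/-- `a` and `b` are adjacent (consecutive) vertices on the convex hull of `S`:
both are hull vertices and the segment between them lies on the hull boundary. -/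
def AdjacentVertices (S : Set Pt) (a b : Pt) : Prop :=
  a ≠ b ∧ IsHullVertex S a ∧ IsHullVertex S b ∧
    segment ℝ a b ⊆ frontier (convexHull ℝ S)

/-- 2D cross product. -/
def cross2 (a b : Pt) : ℝ := a 0 * b 1 - a 1 * b 0

/-- `(t, u, v)` are consecutive vertices of the hull of `S`, in clockwise order
(the turn `t → u → v` is a right turn). -/
def ConsecutiveCW (S : Set Pt) (t u v : Pt) : Prop :=
  AdjacentVertices S t u ∧ AdjacentVertices S u v ∧ t ≠ v ∧
    cross2 (u - t) (v - u) ≤ 0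

/-- Area of the convex hull of `S`. -/
def hullArea (S : Set Pt) : ENNReal := volume (convexHull ℝ S)

/-! ### Auxiliary machinery -/

/-- Twice the signed area of the triangle `p q r`. -/
def sig (p q r : Pt) : ℝ :=
  (q 0 - p 0) * (r 1 - p 1) - (q 1 - p 1) * (r 0 - p 0)

lemma sig_cyc (p q r : Pt) : sig q r p = sig p q r := by unfold sig; ring

/-- Barycentric expansion of an affine functional. -/
lemma affine_bary (a b c : ℝ) (t u v x : Pt) :
    (a * x 0 + b * x 1 + c) * sig t u v
      = (a * t 0 + b * t 1 + c) * sig u v x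
      + (a * u 0 + b * u 1 + c) * sig v t x
      + (a * v 0 + b * v 1 + c) * sig t u x := by unfold sig; ring

lemma sig_sum (t u v x : Pt) : sig u v x + sig v t x + sig t u x = sig t u v := by
  unfold sig; ring

lemma sig_bary (t u v x : Pt) (i : Fin 2) :
    sig u v x * t i + sig v t x * u i + sig t u x * v i = x i * sig t u v := by
  fin_cases i <;> (unfold sig; simp; ring)

/-- `sig p q` is affine in its last argument. -/
lemma sig_combo (p q x y : Pt) {a b : ℝ} (hab : a + b = 1) :
    sig p q (a • x + b • y) = a * sig p q x + b * sig p q y := by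
  have hb : b = 1 - a := by linarith
  subst hb
  simp only [sig, PiLp.add_apply, PiLp.smul_apply, smul_eq_mul]
  ring

/-- Two-dimensional vectors with vanishing cross product are proportional. -/
lemma cross_dep {a0 a1 b0 b1 : ℝ} (h : ¬ (a0 = 0 ∧ a1 = 0))
    (hc : a0 * b1 - a1 * b0 = 0) : ∃ μ : ℝ, b0 = μ * a0 ∧ b1 = μ * a1 := by
  by_cases h0 : a0 = 0
  · have h1 : a1 ≠ 0 := fun h1 => h ⟨h0, h1⟩
    refine ⟨b1 / a1, ?_, by field_simp⟩
    have : a1 * b0 = 0 := by rw [h0] at hc; linarith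
    rcases mul_eq_zero.mp this with h' | h'
    · exact absurd h' h1
    · rw [h', h0]; ring
  · refine ⟨b0 / a0, by field_simp, ?_⟩
    rw [div_mul_eq_mul_div, eq_div_iff h0]
    linear_combination hc

lemma pt_ext {x y : Pt} (h0 : x 0 = y 0) (h1 : x 1 = y 1) : x = y := by
  ext i
  fin_cases i
  · exact h0
  · exact h1

lemma ne_iff_coord {x y : Pt} (h : x ≠ y) : ¬ (x 0 - y 0 = 0 ∧ x 1 - y 1 = 0) := by
  rintro ⟨h0, h1⟩
  exact h (pt_ext (by linarith) (by linarith))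

/-- If `sig t u v = 0` and `t ≠ u` then `t, u, v` are collinear. -/
lemma collinear_of_sig_eq_zero {t u v : Pt} (htu : t ≠ u) (h : sig t u v = 0) :
    Collinear ℝ ({t, u, v} : Set Pt) := by
  obtain ⟨μ, hμ0, hμ1⟩ := cross_dep (b0 := v 0 - t 0) (b1 := v 1 - t 1)
    (ne_iff_coord (Ne.symm htu)) (by unfold sig at h; linear_combination h)
  rw [collinear_iff_of_mem (show t ∈ ({t, u, v} : Set Pt) by simp)]
  refine ⟨u - t, ?_⟩
  rintro p (rfl | rfl | rfl)
  · exact ⟨0, by simp⟩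
  · exact ⟨1, by simp⟩
  · refine ⟨μ, ?_⟩
    have hc : ∀ j : Fin 2, (μ • (u - t) +ᵥ t) j = μ * (u j - t j) + t j := by
      intro j; simp [PiLp.smul_apply, PiLp.sub_apply]
    refine pt_ext ?_ ?_
    · rw [hc 0]; linarith
    · rw [hc 1]; linarith

/-- A hull vertex cannot lie in the open segment between two hull points. -/
lemma hull_vertex_extreme (P : Finset Pt) (w : Pt) (hwP : w ∈ P)
    (hwv : w ∉ convexHull ℝ ((↑P : Set Pt) \ {w})) {x y : Pt}
    (hx : x ∈ convexHull ℝ (↑P : Set Pt)) (hy : y ∈ convexHull ℝ (↑P : Set Pt))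
    (hw : w ∈ openSegment ℝ x y) : x = w ∧ y = w := by
  set Q : Set Pt := (↑P : Set Pt) \ {w} with hQ
  have hPeq : (↑P : Set Pt) = insert w Q := by
    rw [hQ, Set.insert_diff_singleton, Set.insert_eq_self.2 (by exact_mod_cast hwP)]
  obtain ⟨c₁, c₂, hc₁, hc₂, hc, hweq⟩ := hw
  rcases Q.eq_empty_or_nonempty with hQe | hQne
  · have hsing : insert w (∅ : Set Pt) = {w} := by simp
    rw [hPeq, hQe, hsing, convexHull_singleton] at hx hy
    exact ⟨hx, hy⟩
  · rw [hPeq, convexHull_insert hQne, mem_convexJoin] at hx hy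
    obtain ⟨w', hw', x', hx', hxseg⟩ := hx
    obtain ⟨w'', hw'', y', hy', hyseg⟩ := hy
    rw [Set.mem_singleton_iff] at hw' hw''
    rw [hw'] at hxseg
    rw [hw''] at hyseg
    obtain ⟨a₁, a₂, ha₁, ha₂, ha, hxe⟩ := hxseg
    obtain ⟨b₁, b₂, hb₁, hb₂, hb, hye⟩ := hyseg
    -- main scalar relation
    have hvec : (c₁*a₂ + c₂*b₂) • w = (c₁*a₂) • x' + (c₂*b₂) • y' := by
      ext i
      have h1 := congrArg (fun z => z i) hxe
      have h2 := congrArg (fun z => z i) hye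
      have h3 := congrArg (fun z => z i) hweq
      simp only [PiLp.add_apply, PiLp.smul_apply, smul_eq_mul] at h1 h2 h3 ⊢
      linear_combination (-c₁)*h1 + (-c₂)*h2 + (-1)*h3 + (c₁*(w i))*ha + (c₂*(w i))*hb
        + (w i)*hc
    set m : ℝ := c₁*a₂ + c₂*b₂ with hm
    have hm1 : 0 ≤ c₁*a₂ := mul_nonneg hc₁.le ha₂
    have hm2 : 0 ≤ c₂*b₂ := mul_nonneg hc₂.le hb₂
    rcases eq_or_lt_of_le (by positivity : (0:ℝ) ≤ m) with hm0 | hmpos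
    · -- degenerate: x = w and y = w
      have h1 : c₁ * a₂ = 0 := by linarith
      have h2 : c₂ * b₂ = 0 := by linarith
      have ha₂0 : a₂ = 0 := by
        rcases mul_eq_zero.mp h1 with h | h
        · exact absurd h hc₁.ne'
        · exact h
      have hb₂0 : b₂ = 0 := by
        rcases mul_eq_zero.mp h2 with h | h
        · exact absurd h hc₂.ne'
        · exact h
      have ha₁1 : a₁ = 1 := by linarith
      have hb₁1 : b₁ = 1 := by linarith
      constructor
      · rw [← hxe, ha₁1, ha₂0, one_smul, zero_smul, add_zero]
      · rw [← hye, hb₁1, hb₂0, one_smul, zero_smul, add_zero]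
    · -- w would be in the hull of Q
      exfalso
      apply hwv
      have hcomb : w = (c₁*a₂/m) • x' + (c₂*b₂/m) • y' := by
        refine pt_ext ?_ ?_ <;>
        · first
          | (have hvi := congrArg (fun z => z (0 : Fin 2)) hvec
             simp only [PiLp.add_apply, PiLp.smul_apply, smul_eq_mul] at hvi ⊢
             rw [div_mul_eq_mul_div, div_mul_eq_mul_div, ← add_div,
               eq_div_iff hmpos.ne']
             linear_combination hvi)
          | (have hvi := congrArg (fun z => z (1 : Fin 2)) hvec
             simp only [PiLp.add_apply, PiLp.smul_apply, smul_eq_mul] at hvi ⊢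
             rw [div_mul_eq_mul_div, div_mul_eq_mul_div, ← add_div,
               eq_div_iff hmpos.ne']
             linear_combination hvi)
      rw [hcomb]
      exact (convex_convexHull ℝ Q) hx' hy' (div_nonneg hm1 hmpos.le)
        (div_nonneg hm2 hmpos.le) (by field_simp; exact hm.symm)

/-- A point of the hull lying on the line through the hull vertices `t` and `v`
lies on the segment `[t, v]`. -/
lemma on_line_mem_segment (P : Finset Pt) (t v : Pt) (htP : t ∈ P) (hvP : v ∈ P)
    (htv : t ≠ v)
    (htvert : t ∉ convexHull ℝ ((↑P : Set Pt) \ {t}))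
    (hvvert : v ∉ convexHull ℝ ((↑P : Set Pt) \ {v}))
    {x : Pt} (hx : x ∈ convexHull ℝ (↑P : Set Pt)) (hsig : sig v t x = 0) :
    x ∈ segment ℝ t v := by
  have htc : t ∈ convexHull ℝ (↑P : Set Pt) := subset_convexHull ℝ _ (by exact_mod_cast htP)
  have hvc : v ∈ convexHull ℝ (↑P : Set Pt) := subset_convexHull ℝ _ (by exact_mod_cast hvP)
  obtain ⟨μ, hμ0, hμ1⟩ := cross_dep (ne_iff_coord htv)
    (show (t 0 - v 0) * (x 1 - v 1) - (t 1 - v 1) * (x 0 - v 0) = 0 by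
      unfold sig at hsig; linear_combination hsig)
  -- x i = v i + μ * (t i - v i)
  by_cases hμa : 0 ≤ μ
  · by_cases hμb : μ ≤ 1
    · refine ⟨μ, 1 - μ, hμa, by linarith, by ring, ?_⟩
      refine pt_ext ?_ ?_ <;>
        simp only [PiLp.add_apply, PiLp.smul_apply, smul_eq_mul] <;> linarith
    · push_neg at hμb
      exfalso
      have hμpos : 0 < μ := by linarith
      have ht_open : t ∈ openSegment ℝ v x := by
        refine ⟨1 - 1/μ, 1/μ, by rw [sub_pos, div_lt_one hμpos]; linarith,
          by positivity, by ring, ?_⟩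
        refine pt_ext ?_ ?_ <;>
          simp only [PiLp.add_apply, PiLp.smul_apply, smul_eq_mul] <;>
          field_simp <;> [linear_combination hμ0; linear_combination hμ1]
      obtain ⟨h1, _⟩ := hull_vertex_extreme P t htP htvert hvc hx ht_open
      exact htv h1.symm
  · push_neg at hμa
    exfalso
    have h1μ : 0 < 1 - μ := by linarith
    have hv_open : v ∈ openSegment ℝ t x := by
      refine ⟨-μ/(1-μ), 1/(1-μ), div_pos (by linarith) h1μ, by positivity,
        by field_simp; ring, ?_⟩
      refine pt_ext ?_ ?_ <;>
        simp only [PiLp.add_apply, PiLp.smul_apply, smul_eq_mul] <;>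
        field_simp <;> [linear_combination hμ0; linear_combination hμ1]
    obtain ⟨h1, _⟩ := hull_vertex_extreme P v hvP hvvert htc hx hv_open
    exact htv h1

/-- A supporting functional at a frontier point of the hull. -/
lemma support_at_frontier (S : Set Pt) {m x₀ : Pt}
    (hm : m ∈ frontier (convexHull ℝ S)) (hx₀ : x₀ ∈ interior (convexHull ℝ S)) :
    ∃ g : Pt →L[ℝ] ℝ, (∀ x ∈ convexHull ℝ S, g x ≤ g m) ∧ g x₀ < g m := by
  have hconv : Convex ℝ (convexHull ℝ S) := convex_convexHull ℝ S
  have hmni : m ∉ interior (convexHull ℝ S) := fun h => hm.2 h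
  obtain ⟨g, hg⟩ := geometric_hahn_banach_open_point hconv.interior isOpen_interior hmni
  refine ⟨g, fun x hx => ?_, hg _ hx₀⟩
  by_contra hgt
  push_neg at hgt
  have hgx₀ : g x₀ < g m := hg _ hx₀
  set θ₀ : ℝ := (g m - g x₀) / (g x - g x₀) with hθ₀
  have hd : 0 < g x - g x₀ := by linarith
  have h01 : 0 ≤ θ₀ := div_nonneg (by linarith) hd.le
  have hlt1 : θ₀ < 1 := (div_lt_one hd).mpr (by linarith)
  set θ : ℝ := (θ₀ + 1)/2 with hθ
  have hmem : (1 - θ) • x₀ + θ • x ∈ interior (convexHull ℝ S) :=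
    hconv.combo_interior_closure_mem_interior hx₀ (subset_closure hx)
      (by simp only [hθ]; linarith) (by simp only [hθ]; linarith) (by ring)
  have hlt := hg _ hmem
  simp only [map_add, _root_.map_smul, smul_eq_mul] at hlt
  have hgt2 : θ₀ < θ := by simp only [hθ]; linarith
  have h5 := (div_lt_iff₀ hd).mp hgt2
  have h6 : θ * (g x - g x₀) = θ * g x - θ * g x₀ := by ring
  linarith

/-- Every point decomposes along the standard basis. -/
lemma coord_decomp (x : Pt) :
    x = x 0 • EuclideanSpace.single 0 (1:ℝ) + x 1 • EuclideanSpace.single 1 (1:ℝ) := by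
  ext i; fin_cases i <;> simp [EuclideanSpace.single_apply]

lemma clm_coord (g : Pt →L[ℝ] ℝ) (x : Pt) :
    g x = g (EuclideanSpace.single 0 (1:ℝ)) * x 0
      + g (EuclideanSpace.single 1 (1:ℝ)) * x 1 := by
  conv_lhs => rw [coord_decomp x]
  rw [map_add, _root_.map_smul, _root_.map_smul]
  simp [mul_comm]

set_option maxHeartbeats 1000000 in
theorem active_point_in_triangle (P : Finset Pt) (t u v : Pt)
    (hgp : GenPos (↑P : Set Pt))
    (hc : ConsecutiveCW (↑P : Set Pt) t u v) (p : Pt) (hp : p ∈ P)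
    (hnew : IsHullVertex ((↑P : Set Pt) \ {u}) p)
    (hold : ¬ IsHullVertex (↑P : Set Pt) p) :
    p ∈ convexHull ℝ ({t, u, v} : Set Pt) := by
  obtain ⟨⟨htu, hvt, hvu, hseg_tu⟩, ⟨huv, hvu', hvv, hseg_uv⟩, htv, hcw⟩ := hc
  have htP : t ∈ P := by exact_mod_cast hvt.1
  have huP : u ∈ P := by exact_mod_cast hvu.1
  have hvP : v ∈ P := by exact_mod_cast hvv.1
  have hpu : p ≠ u := by
    have := hnew.1
    simp only [Set.mem_diff, Set.mem_singleton_iff] at this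
    exact this.2
  have hpt : p ≠ t := fun h => hold (h ▸ hvt)
  have hpv : p ≠ v := fun h => hold (h ▸ hvv)
  have hpconv : p ∈ convexHull ℝ ((↑P : Set Pt) \ {p}) := by
    by_contra h
    exact hold ⟨by exact_mod_cast hp, h⟩
  have hpnotQ : p ∉ convexHull ℝ (((↑P : Set Pt) \ {u}) \ {p}) := hnew.2
  -- non-collinearity and orientation
  have hncol : ¬ Collinear ℝ ({t, u, v} : Set Pt) :=
    hgp t u v (by exact_mod_cast htP) (by exact_mod_cast huP) (by exact_mod_cast hvP)
      htu huv htv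
  set D : ℝ := sig t u v with hD
  have hD0 : D ≠ 0 := fun h => hncol (collinear_of_sig_eq_zero htu h)
  have hDle : D ≤ 0 := by
    have : cross2 (u - t) (v - u) = D := by
      simp only [cross2, hD, sig, PiLp.sub_apply]; ring
    linarith [hcw, this.symm.le]
  have hDneg : D < 0 := lt_of_le_of_ne hDle hD0
  -- interior point
  have hspan : affineSpan ℝ (↑P : Set Pt) = ⊤ := by
    by_contra hne'
    have hPn : (↑P : Set Pt).Nonempty := ⟨t, by exact_mod_cast htP⟩
    have hcolP : Collinear ℝ (↑P : Set Pt) := by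
      have hv' : vectorSpan ℝ (↑P : Set Pt) ≠ ⊤ := by
        rwa [AffineSubspace.affineSpan_eq_top_iff_vectorSpan_eq_top_of_nonempty ℝ Pt Pt hPn]
          at hne'
      have h2 : Module.finrank ℝ (vectorSpan ℝ (↑P : Set Pt)) < Module.finrank ℝ Pt :=
        Submodule.finrank_lt hv'
      rw [finrank_euclideanSpace_fin] at h2
      rw [collinear_iff_finrank_le_one]
      omega
    exact hncol (hcolP.subset (by
      intro x hx
      rcases hx with rfl | rfl | rfl
      · exact_mod_cast htP
      · exact_mod_cast huP
      · exact_mod_cast hvP))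
  obtain ⟨x₀, hx₀⟩ := interior_convexHull_nonempty_iff_affineSpan_eq_top.mpr hspan
  have hpc : p ∈ convexHull ℝ (↑P : Set Pt) :=
    convexHull_mono Set.diff_subset hpconv
  -- supporting line of edge t u  gives  sig t u p ≤ 0
  have edge_sig : ∀ a b w : Pt, segment ℝ a b ⊆ frontier (convexHull ℝ (↑P : Set Pt)) →
      a ∈ P → b ∈ P → w ∈ P → sig a b w ≠ 0 →
      ∀ x ∈ convexHull ℝ (↑P : Set Pt), sig a b w * sig a b x ≥ 0 := by
    intro a b w hseg haP hbP hwP hsabw x hxc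
    have hm : (1/2 : ℝ) • a + (1/2 : ℝ) • b ∈ frontier (convexHull ℝ (↑P : Set Pt)) :=
      hseg ⟨1/2, 1/2, by norm_num, by norm_num, by norm_num, rfl⟩
    obtain ⟨g, hgle, hglt⟩ := support_at_frontier (↑P : Set Pt) hm hx₀
    set c : ℝ := g ((1/2 : ℝ) • a + (1/2 : ℝ) • b) with hcdef
    have hac : a ∈ convexHull ℝ (↑P : Set Pt) := subset_convexHull ℝ _ (by exact_mod_cast haP)
    have hbc : b ∈ convexHull ℝ (↑P : Set Pt) := subset_convexHull ℝ _ (by exact_mod_cast hbP)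
    have hwc : w ∈ convexHull ℝ (↑P : Set Pt) := subset_convexHull ℝ _ (by exact_mod_cast hwP)
    have hc2 : g a + g b = 2 * c := by
      have : c = (1/2 : ℝ) * g a + (1/2 : ℝ) * g b := by
        rw [hcdef, map_add, _root_.map_smul, _root_.map_smul]; simp
      linarith
    have hgat : g a = c := by have h1 := hgle a hac; have h2 := hgle b hbc; linarith
    have hgbt : g b = c := by have h1 := hgle a hac; have h2 := hgle b hbc; linarith
    -- barycentric identity with the affine functional g - c, basis (a, b, w)
    have key : ∀ z : Pt, (g z - c) * sig a b w = (g w - c) * sig a b z := by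
      intro z
      have h0 := affine_bary (g (EuclideanSpace.single 0 (1:ℝ)))
        (g (EuclideanSpace.single 1 (1:ℝ))) (-c) a b w z
      rw [← clm_coord g z, ← clm_coord g a, ← clm_coord g b, ← clm_coord g w] at h0
      have e1 : g a + -c = 0 := by rw [hgat]; ring
      have e2 : g b + -c = 0 := by rw [hgbt]; ring
      rw [e1, e2] at h0
      linear_combination h0
    have hgwlt : g w < c := by
      rcases lt_or_eq_of_le (hgle w hwc) with h | h
      · exact h
      · exfalso
        have h1 := key x₀
        rw [h, sub_self, zero_mul] at h1
        rcases mul_eq_zero.mp h1 with h'' | h''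
        · exact hglt.ne (by linarith)
        · exact hsabw h''
    have hx1 := hgle x hxc
    have hkx := key x
    have h1 : (g w - c) * (sig a b w * sig a b x) = sig a b w ^ 2 * (g x - c) := by
      linear_combination (-(sig a b w)) * hkx
    nlinarith [sq_nonneg (sig a b w)]
  -- strictness helper for sig of vertices distinct and in general position
  have hsig_tup : sig t u p ≤ 0 := by
    have h := edge_sig t u v hseg_tu htP huP hvP (by rwa [hD] at hD0) p hpc
    nlinarith
  have hsig_uvp : sig u v p ≤ 0 := by
    have hsuv : sig u v t ≠ 0 := by
      have : sig u v t = D := by rw [hD, ← sig_cyc, ← sig_cyc]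
      rw [this]; exact hD0
    have h := edge_sig u v t hseg_uv huP hvP htP hsuv p hpc
    have : sig u v t = D := by rw [hD, ← sig_cyc, ← sig_cyc]
    nlinarith
  -- separation along the line (t, v)
  have hsig_vtp : sig v t p ≤ 0 := by
    by_contra hpos
    push_neg at hpos
    apply hpnotQ
    set Q : Set Pt := ((↑P : Set Pt) \ {u}) \ {p} with hQ
    have htQ : t ∈ Q := by
      simp only [hQ, Set.mem_diff, Set.mem_singleton_iff]
      exact ⟨⟨by exact_mod_cast htP, htu⟩, fun h => hpt h.symm⟩
    have hvQ : v ∈ Q := by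
      simp only [hQ, Set.mem_diff, Set.mem_singleton_iff]
      exact ⟨⟨by exact_mod_cast hvP, fun h => huv h.symm⟩, fun h => hpv h.symm⟩
    have hQconvP : convexHull ℝ Q ⊆ convexHull ℝ (↑P : Set Pt) :=
      convexHull_mono (Set.diff_subset.trans Set.diff_subset)
    have hsplit : (↑P : Set Pt) \ {p} = insert u Q := by
      ext x
      simp only [hQ, Set.mem_diff, Set.mem_singleton_iff, Set.mem_insert_iff]
      constructor
      · rintro ⟨hxP, hxp⟩
        by_cases hxu : x = u
        · exact Or.inl hxu
        · exact Or.inr ⟨⟨hxP, hxu⟩, hxp⟩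
      · rintro (rfl | ⟨⟨hxP, _⟩, hxp⟩)
        · exact ⟨by exact_mod_cast huP, fun h => hpu h.symm⟩
        · exact ⟨hxP, hxp⟩
    rw [hsplit, convexHull_insert ⟨t, htQ⟩, mem_convexJoin] at hpconv
    obtain ⟨u', hu', y, hyQ, hpseg⟩ := hpconv
    rw [Set.mem_singleton_iff] at hu'
    rw [hu'] at hpseg
    obtain ⟨a, b, ha, hb, hab, hpe⟩ := hpseg
    set fu : ℝ := sig v t u with hfu
    set fy : ℝ := sig v t y with hfy
    have hfuD : fu = D := by rw [hfu, hD, sig_cyc u v t, sig_cyc t u v]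
    have hfp : sig v t p = a * fu + b * fy := by
      rw [← hpe]; exact sig_combo v t u y hab
    have hbpos : 0 < b := by
      rcases lt_or_eq_of_le hb with h | h
      · exact h
      · exfalso
        rw [← h, zero_mul, add_zero] at hfp
        have hfun : fu < 0 := hfuD ▸ hDneg
        have ha1 : a = 1 := by linarith
        rw [ha1, one_mul] at hfp
        linarith
    have hfynn : 0 ≤ fy := by
      have hfun : fu < 0 := hfuD ▸ hDneg
      by_contra hneg
      push_neg at hneg
      have h1 : a * fu ≤ 0 := mul_nonpos_iff.mpr (Or.inl ⟨ha, hfun.le⟩)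
      have h2 : b * fy < 0 := mul_neg_of_pos_of_neg hbpos hneg
      linarith
    have hyP : y ∈ convexHull ℝ (↑P : Set Pt) := hQconvP hyQ
    rcases eq_or_lt_of_le hfynn with hfy0 | hfypos
    · -- y is on segment [t, v]; p = y
      have hy_seg : y ∈ segment ℝ t v :=
        on_line_mem_segment P t v htP hvP htv hvt.2 hvv.2 hyP (by rw [← hfy, ← hfy0])
      have ha0 : a = 0 := by
        have hfun : fu < 0 := hfuD ▸ hDneg
        rw [← hfy0, mul_zero, add_zero] at hfp
        by_contra h0
        have hapos : 0 < a := lt_of_le_of_ne ha (Ne.symm h0)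
        nlinarith
      have hpy : p = y := by
        rw [← hpe, ha0, zero_smul, zero_add, show b = 1 by linarith, one_smul]
      rw [hpy]
      exact (convex_convexHull ℝ Q).segment_subset (subset_convexHull ℝ _ htQ)
        (subset_convexHull ℝ _ hvQ) hy_seg
    · -- cross the line t v at w
      have hfuneg : fu < 0 := hfuD ▸ hDneg
      set σ : ℝ := fu / (fu - fy) with hσ
      have hden : fu - fy < 0 := by linarith
      have hσeq : σ * (fu - fy) = fu := by rw [hσ]; exact div_mul_cancel₀ fu hden.ne
      have hσpos : 0 < σ := by rw [hσ, div_pos_iff]; right; exact ⟨hfuneg, hden⟩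
      have hσlt1 : σ < 1 := by
        by_contra hge
        push_neg at hge
        have h2 : σ * (fu - fy) ≤ 1 * (fu - fy) :=
          mul_le_mul_of_nonpos_right hge hden.le
        rw [hσeq, one_mul] at h2
        linarith
      set w : Pt := (1 - σ) • u + σ • y with hw
      have hfw : sig v t w = 0 := by
        rw [hw, sig_combo v t u y (by ring : (1 - σ) + σ = 1), ← hfu, ← hfy]
        linear_combination -hσeq
      have hwP : w ∈ convexHull ℝ (↑P : Set Pt) := by
        rw [hw]
        exact (convex_convexHull ℝ (↑P : Set Pt))
          (subset_convexHull ℝ _ (by exact_mod_cast huP)) hyP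
          (by linarith) hσpos.le (by ring)
      have hw_seg : w ∈ segment ℝ t v :=
        on_line_mem_segment P t v htP hvP htv hvt.2 hvv.2 hwP hfw
      have hwQ : w ∈ convexHull ℝ Q :=
        (convex_convexHull ℝ Q).segment_subset (subset_convexHull ℝ _ htQ)
          (subset_convexHull ℝ _ hvQ) hw_seg
      -- p is a convex combination of w and y
      set τ : ℝ := 1 - a / (1 - σ) with hτ
      have h1σ : 0 < 1 - σ := by linarith
      have hτle1 : τ ≤ 1 := by
        rw [hτ]; have : 0 ≤ a / (1 - σ) := div_nonneg ha h1σ.le; linarith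
      have haup : a * (fy - fu) ≤ fy := by nlinarith [hfp, hpos.le]
      have hτnn : 0 ≤ τ := by
        rw [hτ, sub_nonneg, div_le_one h1σ]
        have h4 : (1 - σ) * (fy - fu) = fy := by linear_combination hσeq
        have h5 : a * (fy - fu) ≤ (1 - σ) * (fy - fu) := haup.trans_eq h4.symm
        exact le_of_mul_le_mul_right h5 (by linarith : (0:ℝ) < fy - fu)
      have hpcomb : (1 - τ) • w + τ • y = p := by
        rw [← hpe, hw]
        ext i
        simp only [PiLp.add_apply, PiLp.smul_apply, smul_eq_mul]
        have hτeq : (1 - τ) * (1 - σ) = a := by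
          rw [hτ]
          field_simp
          ring
        have hbeq : (1 - τ) * σ + τ = b := by linear_combination -hτeq - hab
        linear_combination (u i) * hτeq + (y i) * hbeq
      rw [← hpcomb]
      exact (convex_convexHull ℝ Q) hwQ hyQ (by linarith) hτnn (by ring)
  -- now combine the three half-plane conditions into barycentric coordinates
  set α : ℝ := sig u v p / D with hα
  set β : ℝ := sig v t p / D with hβ
  set γ : ℝ := sig t u p / D with hγ
  have hαnn : 0 ≤ α := by
    rw [hα, div_nonneg_iff]; right; exact ⟨hsig_uvp, hDneg.le⟩
  have hβnn : 0 ≤ β := by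
    rw [hβ, div_nonneg_iff]; right; exact ⟨hsig_vtp, hDneg.le⟩
  have hγnn : 0 ≤ γ := by
    rw [hγ, div_nonneg_iff]; right; exact ⟨hsig_tup, hDneg.le⟩
  have hsum : α + β + γ = 1 := by
    rw [hα, hβ, hγ, ← add_div, ← add_div, sig_sum t u v p, hD,
      div_self hD0]
  have hpeq : p = α • t + β • u + γ • v := by
    ext i
    simp only [PiLp.add_apply, PiLp.smul_apply, smul_eq_mul]
    have h := sig_bary t u v p i
    rw [hα, hβ, hγ, div_mul_eq_mul_div, div_mul_eq_mul_div, div_mul_eq_mul_div,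
      ← add_div, ← add_div, eq_div_iff hD0]
    exact h.symm
  have htm : t ∈ convexHull ℝ ({t, u, v} : Set Pt) := subset_convexHull ℝ _ (by simp)
  have hum : u ∈ convexHull ℝ ({t, u, v} : Set Pt) := subset_convexHull ℝ _ (by simp)
  have hvm : v ∈ convexHull ℝ ({t, u, v} : Set Pt) := subset_convexHull ℝ _ (by simp)
  rcases eq_or_lt_of_le (by positivity : (0:ℝ) ≤ β + γ) with hbg | hbg
  · have hβ0 : β = 0 := by linarith
    have hγ0 : γ = 0 := by linarith
    have : p = t := by
      rw [hpeq, hβ0, hγ0, show α = 1 by linarith]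
      simp
    rw [this]; exact htm
  · set z : Pt := (β/(β+γ)) • u + (γ/(β+γ)) • v with hz
    have hzm : z ∈ convexHull ℝ ({t, u, v} : Set Pt) :=
      (convex_convexHull ℝ _) hum hvm (div_nonneg hβnn hbg.le)
        (div_nonneg hγnn hbg.le) (by field_simp)
    have : p = α • t + (β+γ) • z := by
      rw [hpeq, hz, smul_add, smul_smul, smul_smul,
        mul_div_cancel₀ _ hbg.ne', mul_div_cancel₀ _ hbg.ne', add_assoc]
    rw [this]
    exact (convex_convexHull ℝ _) htm hzm hαnn hbg.le (by linarith)
end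
end

section
/- Let P be a finite set of points in the plane in general position, and let u be a vertex of the convex hull of P with hull-neighbors t and v. If p is active for u (i.e., p is a vertex of CH(P \ {u}) but not of CH(P)), then p lies strictly inside the triangle t u v. -/
open Set MeasureTheory

noncomputable section

/-- A supporting line through two adjacent hull vertices: a linear functional that
is maximized over the hull exactly on the edge `ab`, strictly dominating all other
points of `P` (strictness from general position). -/
lemma supporting_line (P : Finset Pt) (a b : Pt)
    (hgp : GenPos (↑P : Set Pt))
    (hspan : affineSpan ℝ (↑P : Set Pt) = ⊤)
    (hadj : AdjacentVertices (↑P : Set Pt) a b) :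
    ∃ f : Pt →L[ℝ] ℝ, ∃ c : ℝ, f a = c ∧ f b = c ∧
      (∀ x ∈ convexHull ℝ (↑P : Set Pt), f x ≤ c) ∧
      (∀ x ∈ P, x ≠ a → x ≠ b → f x < c) := by
  obtain ⟨hab, ⟨haP, -⟩, ⟨hbP, -⟩, hseg⟩ := hadj
  set K := convexHull ℝ (↑P : Set Pt) with hK
  have hKconv : Convex ℝ K := convex_convexHull ℝ _
  have hint : (interior K).Nonempty := by
    rw [hKconv.interior_nonempty_iff_affineSpan_eq_top, affineSpan_convexHull]
    exact hspan
  set m := midpoint ℝ a b with hmdef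
  have hm : m ∈ frontier K := hseg (midpoint_mem_segment a b)
  obtain ⟨f, hf⟩ := geometric_hahn_banach_open_point hKconv.interior isOpen_interior hm.2
  obtain ⟨y0, hy0⟩ := hint
  have hle : ∀ x ∈ K, f x ≤ f m := by
    intro x hx
    by_contra hlt
    push_neg at hlt
    have hseq : Filter.Tendsto (fun ε : ℝ => ε * f y0 + (1 - ε) * f x)
        (nhdsWithin 0 (Set.Ioi 0)) (nhds (f x)) := by
      have hc : Continuous fun ε : ℝ => ε * f y0 + (1 - ε) * f x := by continuity
      have h0 := hc.tendsto 0
      simp only [zero_mul, sub_zero, one_mul, zero_add] at h0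
      exact h0.mono_left nhdsWithin_le_nhds
    have hev : ∀ᶠ ε in nhdsWithin (0:ℝ) (Set.Ioi 0),
        ε * f y0 + (1 - ε) * f x ≤ f m := by
      filter_upwards [Ioo_mem_nhdsGT_of_mem (by norm_num : (0:ℝ) ∈ Set.Ico 0 1)] with ε hε
      have hmem : ε • y0 + (1 - ε) • x ∈ interior K :=
        hKconv.combo_interior_closure_mem_interior hy0 (subset_closure hx) hε.1
          (by linarith [hε.2]) (by ring)
      have := hf _ hmem
      simpa [smul_eq_mul] using this.le
    have := le_of_tendsto hseq hev
    linarith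
  have hfa : f a ≤ f m := hle a (subset_convexHull ℝ _ haP)
  have hfb : f b ≤ f m := hle b (subset_convexHull ℝ _ hbP)
  have hmid : f m = (f a + f b) / 2 := by
    rw [hmdef, midpoint_eq_smul_add, _root_.map_smul, _root_.map_add]
    simp [smul_eq_mul]
    ring
  have hfa' : f a = f m := by linarith
  have hfb' : f b = f m := by linarith
  refine ⟨f, f m, hfa', hfb', hle, ?_⟩
  intro x hx hxa hxb
  have hxK : f x ≤ f m := hle x (subset_convexHull ℝ _ (by exact_mod_cast hx))
  rcases lt_or_eq_of_le hxK with h | h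
  · exact h
  exfalso
  have hfne : (f : Pt →ₗ[ℝ] ℝ) ≠ 0 := by
    intro h0
    have := hf y0 hy0
    rw [show f y0 = (f : Pt →ₗ[ℝ] ℝ) y0 from rfl,
      show f m = (f : Pt →ₗ[ℝ] ℝ) m from rfl, h0] at this
    simp at this
  have hker : vectorSpan ℝ ({a, b, x} : Set Pt) ≤ LinearMap.ker (f : Pt →ₗ[ℝ] ℝ) := by
    have hval : ∀ z ∈ ({a, b, x} : Set Pt), f z = f m := by
      rintro z (rfl | rfl | rfl)
      · exact hfa'
      · exact hfb'
      · exact h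
    rw [vectorSpan_def]
    apply Submodule.span_le.2
    rintro d hd
    rw [Set.mem_vsub] at hd
    obtain ⟨y, hy, z, hz, rfl⟩ := hd
    rw [SetLike.mem_coe, LinearMap.mem_ker]
    have h1 := hval y hy
    have h2 := hval z hz
    show f (y -ᵥ z) = 0
    rw [vsub_eq_sub, map_sub, h1, h2, sub_self]
  have hkerdim : Module.finrank ℝ (LinearMap.ker (f : Pt →ₗ[ℝ] ℝ)) ≤ 1 := by
    have hr := LinearMap.finrank_range_add_finrank_ker (f : Pt →ₗ[ℝ] ℝ)
    have hrange : LinearMap.range (f : Pt →ₗ[ℝ] ℝ) ≠ ⊥ := by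
      intro hbot
      exact hfne (LinearMap.range_eq_bot.1 hbot)
    have hpos : 0 < Module.finrank ℝ (LinearMap.range (f : Pt →ₗ[ℝ] ℝ)) := by
      rcases Nat.eq_zero_or_pos (Module.finrank ℝ (LinearMap.range (f : Pt →ₗ[ℝ] ℝ))) with h0 | h0
      · exact absurd (Submodule.finrank_eq_zero.1 h0) hrange
      · exact h0
    have hdim : Module.finrank ℝ Pt = 2 := finrank_euclideanSpace_fin
    omega
  have hcol : Collinear ℝ ({a, b, x} : Set Pt) := by
    rw [collinear_iff_finrank_le_one]
    exact le_trans (Submodule.finrank_mono hker) hkerdim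
  exact hgp a b x haP hbP (by exact_mod_cast hx) hab hxb.symm hxa.symm hcol

set_option maxHeartbeats 2000000 in
theorem active_point_strictly_in_triangle (P : Finset Pt) (t u v p : Pt)
    (hgp : GenPos (↑P : Set Pt))
    (hc : ConsecutiveCW (↑P : Set Pt) t u v) (hp : p ∈ P)
    (ha : ActiveFor (↑P : Set Pt) u p) :
    p ∈ interior (convexHull ℝ ({t, u, v} : Set Pt)) := by
  obtain ⟨hadj_tu, hadj_uv, htv, -⟩ := hc
  have htu : t ≠ u := hadj_tu.1
  have huv : u ≠ v := hadj_uv.1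
  have hVt : IsHullVertex (↑P : Set Pt) t := hadj_tu.2.1
  have hVu : IsHullVertex (↑P : Set Pt) u := hadj_tu.2.2.1
  have hVv : IsHullVertex (↑P : Set Pt) v := hadj_uv.2.2.1
  have htP : t ∈ (↑P : Set Pt) := hVt.1
  have huP : u ∈ (↑P : Set Pt) := hVu.1
  have hvP : v ∈ (↑P : Set Pt) := hVv.1
  obtain ⟨⟨hpPu, hpnot⟩, hpNotVert⟩ := ha
  have hpu : p ≠ u := hpPu.2
  have hpconv : p ∈ convexHull ℝ ((↑P : Set Pt) \ {p}) := by
    by_contra hcon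
    exact hpNotVert ⟨by exact_mod_cast hp, hcon⟩
  have hpt : p ≠ t := fun h => hpNotVert (by rw [h]; exact hVt)
  have hpv : p ≠ v := fun h => hpNotVert (by rw [h]; exact hVv)
  -- affine basis from t, u, v
  have hncol : ¬ Collinear ℝ ({t, u, v} : Set Pt) := hgp t u v htP huP hvP htu huv htv
  have hai : AffineIndependent ℝ ![t, u, v] := affineIndependent_iff_not_collinear_set.2 hncol
  have htot : affineSpan ℝ (Set.range ![t, u, v]) = ⊤ := by
    rw [hai.affineSpan_eq_top_iff_card_eq_finrank_add_one]
    simp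
  let b : AffineBasis (Fin 3) ℝ Pt := ⟨![t, u, v], hai, htot⟩
  have hb0 : (b : Fin 3 → Pt) 0 = t := rfl
  have hb1 : (b : Fin 3 → Pt) 1 = u := rfl
  have hb2 : (b : Fin 3 → Pt) 2 = v := rfl
  have hrange : Set.range (b : Fin 3 → Pt) = ({t, u, v} : Set Pt) := by
    show Set.range ![t, u, v] = _
    simp_rw [Matrix.range_cons, Matrix.range_empty, Set.singleton_union, LawfulSingleton.insert_empty_eq]
  have hsum : ∀ x : Pt, b.coord 0 x + b.coord 1 x + b.coord 2 x = 1 := by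
    intro x
    have h := b.sum_coord_apply_eq_one x
    rw [Fin.sum_univ_three] at h
    exact h
  have key : ∀ (g : Pt →ᵃ[ℝ] ℝ) (x : Pt),
      g x = b.coord 0 x * g t + b.coord 1 x * g u + b.coord 2 x * g v := by
    intro g x
    have h1 := b.affineCombination_coord_eq_self x
    have h2 := congrArg g h1
    rw [Finset.map_affineCombination _ _ _ (b.sum_coord_apply_eq_one x) g,
      Finset.affineCombination_eq_linear_combination _ _ _ (b.sum_coord_apply_eq_one x),
      Fin.sum_univ_three] at h2
    rw [← h2]
    simp [hb0, hb1, hb2]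
  have hlin : ∀ x : Pt, x = b.coord 0 x • t + b.coord 1 x • u + b.coord 2 x • v := by
    intro x
    have h1 := b.affineCombination_coord_eq_self x
    rw [Finset.affineCombination_eq_linear_combination _ _ _ (b.sum_coord_apply_eq_one x),
      Fin.sum_univ_three] at h1
    rw [hb0, hb1, hb2] at h1
    exact h1.symm
  -- span of P
  have hspanP : affineSpan ℝ (↑P : Set Pt) = ⊤ := by
    apply top_unique
    rw [← htot]
    apply affineSpan_mono
    intro x hx
    rcases hx with ⟨i, rfl⟩
    fin_cases i
    · exact htP
    · exact huP
    · exact hvP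
  -- supporting lines
  obtain ⟨f1, c1, hf1t, hf1u, hf1K, hf1s⟩ := supporting_line P t u hgp hspanP hadj_tu
  obtain ⟨f2, c2, hf2u, hf2v, hf2K, hf2s⟩ := supporting_line P u v hgp hspanP hadj_uv
  -- coordinate positivity from supporting lines
  have coord2_eq : ∀ x : Pt, b.coord 2 x * (c1 - f1 v) = c1 - f1 x := by
    intro x
    have hk := key ((f1 : Pt →ₗ[ℝ] ℝ).toAffineMap) x
    simp only [LinearMap.coe_toAffineMap] at hk
    have hkk : f1 x = b.coord 0 x * f1 t + b.coord 1 x * f1 u + b.coord 2 x * f1 v := hk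
    rw [hf1t, hf1u] at hkk
    have hs := hsum x
    linear_combination hkk + c1 * hs
  have coord0_eq : ∀ x : Pt, b.coord 0 x * (c2 - f2 t) = c2 - f2 x := by
    intro x
    have hk := key ((f2 : Pt →ₗ[ℝ] ℝ).toAffineMap) x
    simp only [LinearMap.coe_toAffineMap] at hk
    have hkk : f2 x = b.coord 0 x * f2 t + b.coord 1 x * f2 u + b.coord 2 x * f2 v := hk
    rw [hf2u, hf2v] at hkk
    have hs := hsum x
    linear_combination hkk + c2 * hs
  have hd1 : 0 < c1 - f1 v := by
    have := hf1s v (by exact_mod_cast hvP) htv.symm huv.symm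
    linarith
  have hd2 : 0 < c2 - f2 t := by
    have := hf2s t (by exact_mod_cast htP) htu htv
    linarith
  have coord2_pos : ∀ x ∈ (↑P : Set Pt), x ≠ t → x ≠ u → 0 < b.coord 2 x := by
    intro x hx hxt hxu
    have hlt := hf1s x (by exact_mod_cast hx) hxt hxu
    have heq := coord2_eq x
    nlinarith [hd1, heq, hlt]
  have coord0_pos : ∀ x ∈ (↑P : Set Pt), x ≠ u → x ≠ v → 0 < b.coord 0 x := by
    intro x hx hxu hxv
    have hlt := hf2s x (by exact_mod_cast hx) hxu hxv
    have heq := coord0_eq x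
    nlinarith [hd2, heq, hlt]
  have hct0 : b.coord 2 t = 0 := by
    rw [← hb0]; exact b.coord_apply_ne (by decide)
  have hcu2' : b.coord 2 u = 0 := by
    rw [← hb1]; exact b.coord_apply_ne (by decide)
  have hcu0' : b.coord 0 u = 0 := by
    rw [← hb1]; exact b.coord_apply_ne (by decide)
  have hcv0 : b.coord 0 v = 0 := by
    rw [← hb2]; exact b.coord_apply_ne (by decide)
  have coord2_nonneg : ∀ x ∈ (↑P : Set Pt), 0 ≤ b.coord 2 x := by
    intro x hx
    rcases eq_or_ne x t with h | hxt
    · have h0 : b.coord 2 x = 0 := by rw [h]; exact hct0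
      exact h0.ge
    rcases eq_or_ne x u with h | hxu
    · have h0 : b.coord 2 x = 0 := by rw [h]; exact hcu2'
      exact h0.ge
    exact (coord2_pos x hx hxt hxu).le
  have coord0_nonneg : ∀ x ∈ (↑P : Set Pt), 0 ≤ b.coord 0 x := by
    intro x hx
    rcases eq_or_ne x u with h | hxu
    · have h0 : b.coord 0 x = 0 := by rw [h]; exact hcu0'
      exact h0.ge
    rcases eq_or_ne x v with h | hxv
    · have h0 : b.coord 0 x = 0 := by rw [h]; exact hcv0
      exact h0.ge
    exact (coord0_pos x hx hxu hxv).le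
  -- the set Q
  set Q : Set Pt := convexHull ℝ (((↑P : Set Pt) \ {u}) \ {p}) with hQ
  have hQconv : Convex ℝ Q := convex_convexHull ℝ _
  have htQs : t ∈ ((↑P : Set Pt) \ {u}) \ {p} := ⟨⟨htP, htu⟩, fun h => hpt (Set.mem_singleton_iff.1 h).symm⟩
  have hvQs : v ∈ ((↑P : Set Pt) \ {u}) \ {p} := ⟨⟨hvP, fun h => huv (Set.mem_singleton_iff.1 h).symm⟩, fun h => hpv (Set.mem_singleton_iff.1 h).symm⟩
  have htQ : t ∈ Q := subset_convexHull ℝ _ htQs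
  have hvQ : v ∈ Q := subset_convexHull ℝ _ hvQs
  have hQ0 : ∀ z ∈ Q, 0 ≤ b.coord 0 z := by
    intro z hz
    refine convexHull_min ?_ ((convex_Ici (0:ℝ)).affine_preimage (b.coord 0)) hz
    intro x hx
    exact coord0_nonneg x hx.1.1
  have hQ2 : ∀ z ∈ Q, 0 ≤ b.coord 2 z := by
    intro z hz
    refine convexHull_min ?_ ((convex_Ici (0:ℝ)).affine_preimage (b.coord 2)) hz
    intro x hx
    exact coord2_nonneg x hx.1.1
  -- main coordinate positivity for u-coordinate
  have hw1 : 0 < b.coord 1 p := by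
    by_contra hle1
    push_neg at hle1
    have hsub : (↑P : Set Pt) \ {p} ⊆ insert u (((↑P : Set Pt) \ {u}) \ {p}) := by
      intro x hx
      rcases eq_or_ne x u with rfl | hxu
      · exact Set.mem_insert _ _
      · exact Set.mem_insert_iff.2 (Or.inr ⟨⟨hx.1, hxu⟩, hx.2⟩)
    have hne : (((↑P : Set Pt) \ {u}) \ {p}).Nonempty := ⟨t, htQs⟩
    have hp2 : p ∈ convexHull ℝ (insert u (((↑P : Set Pt) \ {u}) \ {p})) :=
      convexHull_mono hsub hpconv
    rw [convexHull_insert hne, mem_convexJoin] at hp2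
    obtain ⟨a, ha, q, hq, hpq⟩ := hp2
    rw [Set.mem_singleton_iff] at ha
    rw [ha] at hpq
    obtain ⟨α, β, hα, hβ, hαβ, hcomb⟩ := hpq
    -- coordinates of p along [u,q]
    have hcu0 : b.coord 0 u = 0 := hcu0'
    have hcu1 : b.coord 1 u = 1 := by
      rw [← hb1]; exact b.coord_apply_eq 1
    have hcu2 : b.coord 2 u = 0 := hcu2'
    have hmapc : ∀ i : Fin 3, ∀ γ : ℝ, b.coord i ((1 - γ) • u + γ • q)
        = (1 - γ) * b.coord i u + γ * b.coord i q := by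
      intro i γ
      have h1 : (1 - γ) • u + γ • q = AffineMap.lineMap u q γ := by
        rw [AffineMap.lineMap_apply_module]
      rw [h1, AffineMap.apply_lineMap, AffineMap.lineMap_apply_module]
      simp [smul_eq_mul]
    have hα' : α = 1 - β := by linarith
    rw [hα'] at hcomb
    -- p coordinate 1
    have hp1 : b.coord 1 p = (1 - β) * 1 + β * b.coord 1 q := by
      rw [← hcomb, hmapc, hcu1]
    have hβle : β ≤ 1 := by linarith
    have hq1 : 1 ≤ β * (1 - b.coord 1 q) := by nlinarith [hp1, hle1]
    have hβpos : 0 < β := by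
      rcases eq_or_lt_of_le hβ with h0 | h0
      · exfalso
        rw [← h0] at hq1
        simp at hq1
        linarith
      · exact h0
    rcases eq_or_lt_of_le hβle with hβ1 | hβ1
    · -- β = 1 : p = q ∈ Q, contradiction
      apply hpnot
      have hpq : p = q := by
        rw [← hcomb, hβ1]
        simp
      rw [hpq]
      exact hq
    · -- β < 1
      have hden : 0 < 1 - b.coord 1 q := by nlinarith [hq1, hβpos, hβ1]
      set γ : ℝ := 1 / (1 - b.coord 1 q) with hγdef
      have hγpos : 0 < γ := one_div_pos.2 hden
      have hγβ : γ ≤ β := by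
        rw [hγdef, div_le_iff₀ hden]
        linarith [hq1]
      have hγlt1 : γ < 1 := lt_of_le_of_lt hγβ hβ1
      clear_value γ
      set r : Pt := (1 - γ) • u + γ • q with hrdef
      clear_value r
      have hr1 : b.coord 1 r = 0 := by
        rw [hrdef, hmapc, hcu1, hγdef]
        field_simp
        ring
      have hr0 : 0 ≤ b.coord 0 r := by
        rw [hrdef, hmapc, hcu0]
        have hq0 := hQ0 q hq
        nlinarith [hγpos, hq0]
      have hr2 : 0 ≤ b.coord 2 r := by
        rw [hrdef, hmapc, hcu2]
        have hq2 := hQ2 q hq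
        nlinarith [hγpos, hq2]
      have hrsum : b.coord 0 r + b.coord 2 r = 1 := by
        have := hsum r
        rw [hr1] at this
        linarith
      have hrseg : r ∈ segment ℝ t v := by
        refine ⟨b.coord 0 r, b.coord 2 r, hr0, hr2, hrsum, ?_⟩
        have hl := hlin r
        rw [hr1, zero_smul, add_zero] at hl
        exact hl.symm
      have hrQ : r ∈ Q := hQconv.segment_subset htQ hvQ hrseg
      set δ : ℝ := (β - γ) / (1 - γ) with hδdef
      have hδ0 : 0 ≤ δ := div_nonneg (by linarith) (by linarith)
      have hδ1 : δ ≤ 1 := by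
        rw [hδdef, div_le_one (by linarith)]
        linarith
      clear_value δ
      have h1γ : (1:ℝ) - γ ≠ 0 := by linarith
      have hpeq : (1 - δ) • r + δ • q = p := by
        rw [hrdef, ← hcomb, hδdef]
        match_scalars
        · field_simp
          ring
        · field_simp
          ring
      have hpQ : p ∈ Q :=
        hQconv.segment_subset hrQ hq ⟨1 - δ, δ, by linarith, hδ0, by ring, hpeq⟩
      exact hpnot hpQ
  -- conclude
  rw [← hrange, b.interior_convexHull]
  simp only [Set.mem_setOf_eq]
  intro i
  fin_cases i
  · exact coord0_pos p (by exact_mod_cast hp) hpu hpv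
  · exact hw1
  · exact coord2_pos p (by exact_mod_cast hp) hpt hpu
end
end

section
/- Let P be a finite set of points in the plane in general position. Then every point p ∈ P is active for at most three vertices of the convex hull of P. Equivalently, since a point active for a hull vertex u lies strictly inside the triangle formed by u and its two hull neighbors, any point of P lies strictly inside at most three such triangles. -/
open Set MeasureTheory

noncomputable section

theorem active_for_at_most_three (P : Finset Pt)
    (hgp : GenPos (↑P : Set Pt)) (h4 : 4 ≤ P.card) (p : Pt) (hp : p ∈ P) :
    Set.ncard {u : Pt | IsHullVertex (↑P : Set Pt) u ∧ ActiveFor (↑P : Set Pt) u p} ≤ 3 := by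
  by_contra hlt
  push_neg at hlt
  obtain ⟨F, hFsub, hFcard⟩ := Set.exists_subset_card_eq (n := 4) hlt
  -- F is a finite set of 4 distinct active vertices
  have hFfin : F.Finite := Set.finite_of_ncard_ne_zero (by omega)
  -- p is not a hull vertex of P, hence p ∈ conv (P \ {p})
  have hFne : F.Nonempty := Set.nonempty_of_ncard_ne_zero (by omega)
  obtain ⟨u0, hu0⟩ := hFne
  have hact0 := (hFsub hu0).2
  have hpconv : p ∈ convexHull ℝ ((↑P : Set Pt) \ {p}) := by
    by_contra h
    exact hact0.2 ⟨hp, h⟩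
  -- Carathéodory
  rw [convexHull_eq_union] at hpconv
  simp only [Set.mem_iUnion] at hpconv
  obtain ⟨t, hts, hai, hpt⟩ := hpconv
  -- t has at most 3 elements
  have htcard : t.card ≤ 3 := by
    have h1 := hai.card_le_finrank_succ
    have h2 : Module.finrank ℝ (vectorSpan ℝ (Set.range ((↑) : t → Pt))) ≤
        Module.finrank ℝ Pt := Submodule.finrank_le _
    have h3 : Module.finrank ℝ Pt = 2 := by
      simp [finrank_euclideanSpace]
    simp only [Fintype.card_coe] at h1
    omega
  -- some u ∈ F is not in t
  have : ¬ (F ⊆ ↑t) := by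
    intro hsub
    have := Set.ncard_le_ncard hsub t.finite_toSet
    simp [Set.ncard_coe_finset, hFcard] at this
    omega
  rw [Set.not_subset] at this
  obtain ⟨u, huF, hut⟩ := this
  have hact := (hFsub huF).2.1
  -- p is a hull vertex of P \ {u}, so p ∉ conv (P \ {u} \ {p})
  apply hact.2
  have hsub2 : (↑t : Set Pt) ⊆ ((↑P : Set Pt) \ {u}) \ {p} := by
    intro x hx
    have hx' := hts hx
    refine ⟨⟨hx'.1, ?_⟩, hx'.2⟩
    simp only [Set.mem_singleton_iff]
    rintro rfl
    exact hut hx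
  exact convexHull_mono hsub2 hpt
end
end

section
/- Let P be a finite set of points in the plane in general position, and let u, z be two non-adjacent vertices of the convex hull of P (i.e., z is not u and not a hull-neighbor of u). Let T(u) and T(z) be the triangles formed by u (resp. z) together with their respective hull neighbors. Then the interiors of T(u) and T(z) are disjoint. -/
open Set MeasureTheory

noncomputable section

/-! ### Auxiliary lemmas -/

/-- A supporting functional along an edge of the hull. -/
lemma exists_support (P : Finset Pt) {p q : Pt}
    (hne : (interior (convexHull ℝ (↑P : Set Pt))).Nonempty)
    (hadj : AdjacentVertices (↑P : Set Pt) p q) :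
    ∃ f : Pt →L[ℝ] ℝ, f ≠ 0 ∧ f q = f p ∧
      ∀ x ∈ convexHull ℝ (↑P : Set Pt), f x ≤ f p := by
  set K := convexHull ℝ (↑P : Set Pt) with hK
  have hKconv : Convex ℝ K := convex_convexHull ℝ _
  set m := midpoint ℝ p q with hm
  have hmfr : m ∈ frontier K := hadj.2.2.2 (midpoint_mem_segment p q)
  have hmint : m ∉ interior K := fun h => hmfr.2 h
  obtain ⟨f, hf⟩ := geometric_hahn_banach_open_point (hKconv.interior) isOpen_interior hmint
  obtain ⟨a, ha⟩ := hne
  have key : ∀ x ∈ K, f x ≤ f m := by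
    intro x hx
    by_contra hlt
    push_neg at hlt
    have hfa : f a < f m := hf a ha
    have hd : 0 < f x - f a := by linarith
    set θ₀ : ℝ := (f m - f a) / (f x - f a) with hθ₀
    have hθ₀0 : 0 < θ₀ := div_pos (by linarith) hd
    have hθ₀1 : θ₀ < 1 := (div_lt_one hd).2 (by linarith)
    set θ : ℝ := (θ₀ + 1) / 2 with hθ
    have h1 : θ₀ * (f x - f a) = f m - f a := div_mul_cancel₀ _ hd.ne'
    have hpmem : (1 - θ) • a + θ • x ∈ interior K :=
      hKconv.combo_interior_self_mem_interior ha hx (by linarith) (by linarith) (by ring)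
    have := hf _ hpmem
    rw [map_add, _root_.map_smul, _root_.map_smul] at this
    simp only [smul_eq_mul] at this
    nlinarith
  have hp : f p ≤ f m := key p (subset_convexHull ℝ _ hadj.2.1.1)
  have hq : f q ≤ f m := key q (subset_convexHull ℝ _ hadj.2.2.1.1)
  have hmval : f m = (f p + f q) / 2 := by
    rw [hm, midpoint_eq_smul_add, _root_.map_smul]
    rw [map_add]
    simp [smul_eq_mul]
    ring
  have hfp : f p = f m := by linarith
  have hfq : f q = f m := by linarith
  refine ⟨f, ?_, by linarith, fun x hx => (key x hx).trans_eq hfp.symm⟩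
  intro h0
  rw [h0] at hf
  exact absurd (hf a ha) (by simp)

/-- Three points on a level set of a nonzero functional are collinear. -/
lemma collinear_of_level (f : Pt →L[ℝ] ℝ) (hf : f ≠ 0) {p q x : Pt}
    (hq : f q = f p) (hx : f x = f p) : Collinear ℝ ({p, q, x} : Set Pt) := by
  have hfin : FiniteDimensional ℝ Pt := by infer_instance
  rw [collinear_iff_rank_le_one]
  have hsub : vectorSpan ℝ ({p, q, x} : Set Pt) ≤ LinearMap.ker (f : Pt →ₗ[ℝ] ℝ) := by
    rw [vectorSpan_def, Submodule.span_le]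
    rintro y ⟨y1, hy1, y2, hy2, rfl⟩
    have h1 : f y1 = f p := by
      rcases hy1 with rfl | rfl | rfl
      · rfl
      · exact hq
      · exact hx
    have h2 : f y2 = f p := by
      rcases hy2 with rfl | rfl | rfl
      · rfl
      · exact hq
      · exact hx
    simp only [SetLike.mem_coe, LinearMap.mem_ker, vsub_eq_sub]
    show f (y1 - y2) = 0
    rw [map_sub, h1, h2, sub_self]
  have hker : Module.rank ℝ (LinearMap.ker (f : Pt →ₗ[ℝ] ℝ)) ≤ 1 := by
    have hrange : Module.finrank ℝ (LinearMap.range (f : Pt →ₗ[ℝ] ℝ)) = 1 := by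
      have : LinearMap.range (f : Pt →ₗ[ℝ] ℝ) = ⊤ := by
        rw [LinearMap.range_eq_top]
        intro c
        obtain ⟨y, hy⟩ : ∃ y, f y ≠ 0 := by
          by_contra h
          push_neg at h
          exact hf (by ext y; simp [h y])
        exact ⟨(c / f y) • y, by simp [_root_.map_smul]; field_simp⟩
      rw [this]
      simp [finrank_top, finrank_euclideanSpace]
    have hrk := LinearMap.finrank_range_add_finrank_ker (f : Pt →ₗ[ℝ] ℝ)
    have hPt : Module.finrank ℝ Pt = 2 := by simp [finrank_euclideanSpace]
    rw [hrange, hPt] at hrk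
    have : Module.finrank ℝ (LinearMap.ker (f : Pt →ₗ[ℝ] ℝ)) = 1 := by omega
    rw [← Module.finrank_eq_rank, this]
    norm_num
  exact le_trans (Submodule.rank_mono hsub) hker

/-- Evaluate an affine map via barycentric coordinates. -/
lemma eval_affine (B : AffineBasis (Fin 3) ℝ Pt) (g : Pt →ᵃ[ℝ] ℝ) (x : Pt) :
    g x = ∑ m, B.coord m x * g (B m) := by
  conv_lhs => rw [← B.affineCombination_coord_eq_self x]
  rw [Finset.map_affineCombination _ _ _ (B.sum_coord_apply_eq_one x),
    Finset.univ.affineCombination_eq_linear_combination _ _ (B.sum_coord_apply_eq_one x)]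
  simp [smul_eq_mul, Function.comp]

lemma eval_clm (B : AffineBasis (Fin 3) ℝ Pt) (f : Pt →L[ℝ] ℝ) (x : Pt) :
    f x = ∑ m, B.coord m x * f (B m) :=
  eval_affine B ((f : Pt →ₗ[ℝ] ℝ).toAffineMap) x

/-- An affine basis from three non-collinear points of the plane. -/
def mkBasis {t u v : Pt} (h : ¬ Collinear ℝ ({t, u, v} : Set Pt)) :
    AffineBasis (Fin 3) ℝ Pt := by
  refine ⟨![t, u, v], affineIndependent_iff_not_collinear_set.2 h, ?_⟩
  rw [AffineIndependent.affineSpan_eq_top_iff_card_eq_finrank_add_one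
    (affineIndependent_iff_not_collinear_set.2 h)]
  simp [finrank_euclideanSpace]

@[simp] lemma mkBasis_apply {t u v : Pt} (h : ¬ Collinear ℝ ({t, u, v} : Set Pt)) (i : Fin 3) :
    mkBasis h i = ![t, u, v] i := rfl

lemma range_mkBasis {t u v : Pt} (h : ¬ Collinear ℝ ({t, u, v} : Set Pt)) :
    Set.range ⇑(mkBasis h) = ({t, u, v} : Set Pt) := by
  ext x
  constructor
  · rintro ⟨i, rfl⟩
    fin_cases i <;> simp
  · rintro (rfl | rfl | rfl)
    exacts [⟨0, rfl⟩, ⟨1, rfl⟩, ⟨2, rfl⟩]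

lemma interior_hull_nonempty (P : Finset Pt) (hgp : GenPos (↑P : Set Pt))
    (h5 : 5 ≤ Set.ncard {p : Pt | IsHullVertex (↑P : Set Pt) p}) :
    (interior (convexHull ℝ (↑P : Set Pt))).Nonempty := by
  have hfin : {p : Pt | IsHullVertex (↑P : Set Pt) p}.Finite :=
    P.finite_toSet.subset (fun p hp => hp.1)
  have h2 : 2 < Set.ncard {p : Pt | IsHullVertex (↑P : Set Pt) p} := by omega
  rw [Set.two_lt_ncard hfin] at h2
  obtain ⟨p, hp, q, hq, r, hr, hpq, hpr, hqr⟩ := h2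
  have hcol : ¬ Collinear ℝ ({p, q, r} : Set Pt) :=
    hgp p q r hp.1 hq.1 hr.1 hpq hqr hpr
  rw [interior_convexHull_nonempty_iff_affineSpan_eq_top]
  have hle : affineSpan ℝ ({p, q, r} : Set Pt) ≤ affineSpan ℝ (↑P : Set Pt) := by
    apply affineSpan_mono
    rintro x (rfl | rfl | rfl)
    exacts [hp.1, hq.1, hr.1]
  have htop : affineSpan ℝ ({p, q, r} : Set Pt) = ⊤ := by
    rw [← range_mkBasis hcol]
    exact (mkBasis hcol).tot
  rw [← top_le_iff, ← htop]
  exact hle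

/-- If `B i`–`B j` is a hull edge, the `k`-th barycentric coordinate is
nonnegative on the whole hull. -/
lemma coord_nonneg_of_edge (P : Finset Pt) (hgp : GenPos (↑P : Set Pt))
    (hne : (interior (convexHull ℝ (↑P : Set Pt))).Nonempty)
    (B : AffineBasis (Fin 3) ℝ Pt) (hBP : ∀ m, B m ∈ (↑P : Set Pt))
    (i j k : Fin 3) (hik : i ≠ k) (hjk : j ≠ k)
    (hijk : ∀ m : Fin 3, m ≠ k → m = i ∨ m = j)
    (hadj : AdjacentVertices (↑P : Set Pt) (B i) (B j)) :
    ∀ x ∈ convexHull ℝ (↑P : Set Pt), 0 ≤ B.coord k x := by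
  obtain ⟨f, hf0, hfji, hfle⟩ := exists_support P hne hadj
  set c : ℝ := f (B i) with hc
  have hinj := B.ind.injective
  have hkle : f (B k) ≤ c := hfle (B k) (subset_convexHull ℝ _ (hBP k))
  have hklt : f (B k) < c := by
    rcases lt_or_eq_of_le hkle with h | h
    · exact h
    · exfalso
      have hcol := collinear_of_level f hf0 hfji h
      exact hgp (B i) (B j) (B k) (hBP i) (hBP j) (hBP k) hadj.1
        (fun he => hjk (hinj he)) (fun he => hik (hinj he)) hcol
  intro x hx
  have hval : ∀ m : Fin 3, m ≠ k → f (B m) = c := by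
    intro m hm
    rcases hijk m hm with rfl | rfl
    · rfl
    · exact hfji
  have hev := eval_clm B f x
  have hsum : (∑ m, B.coord m x) = 1 := B.sum_coord_apply_eq_one x
  have hsplit : f x - c = B.coord k x * (f (B k) - c) := by
    have : f x - c = ∑ m, B.coord m x * (f (B m) - c) := by
      rw [Finset.sum_congr rfl (fun m _ => mul_sub (B.coord m x) (f (B m)) c),
        Finset.sum_sub_distrib, ← Finset.sum_mul, hsum, one_mul, ← hev]
    rw [this]
    apply Finset.sum_eq_single
    · intro m _ hm
      rw [hval m hm, sub_self, mul_zero]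
    · intro h
      exact absurd (Finset.mem_univ k) h
  have hxle : f x ≤ c := hfle x hx
  nlinarith [hsplit, hklt, hxle]

/-- A hull vertex distinct from all basis points has some negative coordinate;
specifically, if coordinates `0` and `2` are known nonnegative, coordinate `1`
is strictly negative. -/
lemma coord_one_neg_of_vertex (P : Finset Pt)
    (B : AffineBasis (Fin 3) ℝ Pt) (hBP : ∀ m, B m ∈ (↑P : Set Pt))
    {p : Pt} (hv : IsHullVertex (↑P : Set Pt) p) (hBp : ∀ m, B m ≠ p)
    (h0 : 0 ≤ B.coord 0 p) (h2 : 0 ≤ B.coord 2 p) :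
    B.coord 1 p < 0 := by
  by_contra h1
  push_neg at h1
  have hall : ∀ m : Fin 3, 0 ≤ B.coord m p := by
    intro m
    fin_cases m
    · exact h0
    · exact h1
    · exact h2
  have hmem : p ∈ convexHull ℝ (Set.range ⇑B) := by
    have := affineCombination_mem_convexHull (s := Finset.univ) (v := ⇑B)
      (w := fun m => B.coord m p) (fun m _ => hall m) (B.sum_coord_apply_eq_one p)
    rwa [B.affineCombination_coord_eq_self p] at this
  have hsub : Set.range ⇑B ⊆ (↑P : Set Pt) \ {p} := by
    rintro x ⟨m, rfl⟩
    exact ⟨hBP m, hBp m⟩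
  exact hv.2 (convexHull_mono hsub hmem)

/-- A hull vertex of the plane cannot have three distinct neighbours. -/
lemma no_three_neighbors (P : Finset Pt) (hgp : GenPos (↑P : Set Pt))
    (hne : (interior (convexHull ℝ (↑P : Set Pt))).Nonempty)
    {t u v z : Pt}
    (hadj_tu : AdjacentVertices (↑P : Set Pt) t u)
    (hadj_uv : AdjacentVertices (↑P : Set Pt) u v)
    (hadj_uz : AdjacentVertices (↑P : Set Pt) u z)
    (htv : t ≠ v) (hzt : z ≠ t) (hzv : z ≠ v) : False := by
  have htP : t ∈ (↑P : Set Pt) := hadj_tu.2.1.1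
  have huP : u ∈ (↑P : Set Pt) := hadj_tu.2.2.1.1
  have hvP : v ∈ (↑P : Set Pt) := hadj_uv.2.2.1.1
  have hzP : z ∈ (↑P : Set Pt) := hadj_uz.2.2.1.1
  have htu : t ≠ u := hadj_tu.1
  have huv : u ≠ v := hadj_uv.1
  have huz : u ≠ z := hadj_uz.1
  have hcol : ¬ Collinear ℝ ({t, u, v} : Set Pt) := hgp t u v htP huP hvP htu huv htv
  set B := mkBasis hcol with hB
  have hB0 : B 0 = t := rfl
  have hB1 : B 1 = u := rfl
  have hB2 : B 2 = v := rfl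
  -- support at edge u-z
  obtain ⟨f, hf0, hfzu, hfle⟩ := exists_support P hne hadj_uz
  have hft : f t < f u := by
    rcases lt_or_eq_of_le (hfle t (subset_convexHull ℝ _ htP)) with h | h
    · exact h
    · exact absurd (collinear_of_level f hf0 hfzu h)
        (hgp u z t huP hzP htP huz hzt (Ne.symm htu))
  have hfv : f v < f u := by
    rcases lt_or_eq_of_le (hfle v (subset_convexHull ℝ _ hvP)) with h | h
    · exact h
    · exact absurd (collinear_of_level f hf0 hfzu h)
        (hgp u z v huP hzP hvP huz hzv huv)
  -- support at edge t-u
  obtain ⟨g, hg0, hgut, hgle⟩ := exists_support P hne hadj_tu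
  have hgv : g v < g t := by
    rcases lt_or_eq_of_le (hgle v (subset_convexHull ℝ _ hvP)) with h | h
    · exact h
    · exact absurd (collinear_of_level g hg0 hgut h)
        (hgp t u v htP huP hvP htu huv htv)
  have hgz : g z < g t := by
    rcases lt_or_eq_of_le (hgle z (subset_convexHull ℝ _ hzP)) with h | h
    · exact h
    · exact absurd (collinear_of_level g hg0 hgut h)
        (hgp t u z htP huP hzP htu huz hzt.symm)
  -- support at edge u-v
  obtain ⟨h, hh0, hhvu, hhle⟩ := exists_support P hne hadj_uv
  have hht : h t < h u := by
    rcases lt_or_eq_of_le (hhle t (subset_convexHull ℝ _ htP)) with hh | hh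
    · exact hh
    · exact absurd (collinear_of_level h hh0 hhvu hh)
        (hgp u v t huP hvP htP huv (Ne.symm htv) (Ne.symm htu))
  have hhz : h z < h u := by
    rcases lt_or_eq_of_le (hhle z (subset_convexHull ℝ _ hzP)) with hh | hh
    · exact hh
    · exact absurd (collinear_of_level h hh0 hhvu hh)
        (hgp u v z huP hvP hzP huv hzv.symm huz)
  -- barycentric coordinates of z
  set w0 : ℝ := B.coord 0 z with hw0
  set w1 : ℝ := B.coord 1 z with hw1
  set w2 : ℝ := B.coord 2 z with hw2
  have hsum : w0 + w1 + w2 = 1 := by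
    have := B.sum_coord_apply_eq_one z
    rw [Fin.sum_univ_three] at this
    exact this
  have hfz : f z = w0 * f t + w1 * f u + w2 * f v := by
    have := eval_clm B f z
    rw [Fin.sum_univ_three, hB0, hB1, hB2] at this
    exact this
  have hgz' : g z = w0 * g t + w1 * g u + w2 * g v := by
    have := eval_clm B g z
    rw [Fin.sum_univ_three, hB0, hB1, hB2] at this
    exact this
  have hhz' : h z = w0 * h t + w1 * h u + w2 * h v := by
    have := eval_clm B h z
    rw [Fin.sum_univ_three, hB0, hB1, hB2] at this
    exact this
  rw [hgut] at hgz'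
  rw [hhvu] at hhz'
  rw [hfzu] at hfz
  have hgid : w0 * g t + w1 * g t + w2 * g v = g t + w2 * (g v - g t) := by
    linear_combination g t * hsum
  have hhid : w0 * h t + w1 * h u + w2 * h u = h u + w0 * (h t - h u) := by
    linear_combination h u * hsum
  have hw2pos : 0 < w2 := by
    rcases le_or_gt w2 0 with hle | hpos
    · exfalso
      have := mul_nonneg (neg_nonneg.2 hle) (neg_nonneg.2 (by linarith : g v - g t ≤ 0))
      rw [neg_mul_neg] at this
      linarith [hgz, hgz', hgid]
    · exact hpos
  have hw0pos : 0 < w0 := by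
    rcases le_or_gt w0 0 with hle | hpos
    · exfalso
      have := mul_nonneg (neg_nonneg.2 hle) (neg_nonneg.2 (by linarith : h t - h u ≤ 0))
      rw [neg_mul_neg] at this
      linarith [hhz, hhz', hhid]
    · exact hpos
  have hE : w0 * (f u - f t) + w2 * (f u - f v) = 0 := by
    linear_combination f u * hsum + hfz
  have p1 := mul_pos hw0pos (sub_pos.2 hft)
  have p2 := mul_pos hw2pos (sub_pos.2 hfv)
  linarith

theorem nonadjacent_triangles_disjoint (P : Finset Pt)
    (hgp : GenPos (↑P : Set Pt))
    (h5 : 5 ≤ Set.ncard {p : Pt | IsHullVertex (↑P : Set Pt) p})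
    (t u v a z b : Pt)
    (hcu : ConsecutiveCW (↑P : Set Pt) t u v)
    (hcz : ConsecutiveCW (↑P : Set Pt) a z b)
    (hz : z ∉ ({t, u, v} : Set Pt)) :
    Disjoint (interior (convexHull ℝ ({t, u, v} : Set Pt)))
             (interior (convexHull ℝ ({a, z, b} : Set Pt))) := by
  have hne := interior_hull_nonempty P hgp h5
  obtain ⟨hadj_tu, hadj_uv, htv, -⟩ := hcu
  obtain ⟨hadj_az, hadj_zb, hab, -⟩ := hcz
  have htP : t ∈ (↑P : Set Pt) := hadj_tu.2.1.1
  have huP : u ∈ (↑P : Set Pt) := hadj_tu.2.2.1.1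
  have hvP : v ∈ (↑P : Set Pt) := hadj_uv.2.2.1.1
  have haP : a ∈ (↑P : Set Pt) := hadj_az.2.1.1
  have hzP : z ∈ (↑P : Set Pt) := hadj_az.2.2.1.1
  have hbP : b ∈ (↑P : Set Pt) := hadj_zb.2.2.1.1
  have hzt : z ≠ t := fun h => hz (by rw [h]; left; rfl)
  have hzu : z ≠ u := fun h => hz (by rw [h]; right; left; rfl)
  have hzv : z ≠ v := fun h => hz (by rw [h]; right; right; rfl)
  have htu : t ≠ u := hadj_tu.1
  have huv : u ≠ v := hadj_uv.1
  have haz : a ≠ z := hadj_az.1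
  have hzb : z ≠ b := hadj_zb.1
  have hcol : ¬ Collinear ℝ ({t, u, v} : Set Pt) := hgp t u v htP huP hvP htu huv htv
  have hcolz : ¬ Collinear ℝ ({a, z, b} : Set Pt) := hgp a z b haP hzP hbP haz hzb hab
  set B := mkBasis hcol with hB
  set C := mkBasis hcolz with hC
  have hB0 : B 0 = t := rfl
  have hB1 : B 1 = u := rfl
  have hB2 : B 2 = v := rfl
  have hC0 : C 0 = a := rfl
  have hC1 : C 1 = z := rfl
  have hC2 : C 2 = b := rfl
  have hBP : ∀ m, B m ∈ (↑P : Set Pt) := by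
    intro m; fin_cases m <;> assumption
  -- hull-wide coordinate bounds from the two edges at u
  have H0 : ∀ x ∈ convexHull ℝ (↑P : Set Pt), 0 ≤ B.coord 0 x := by
    have := coord_nonneg_of_edge P hgp hne B hBP 1 2 0 (by decide) (by decide)
      (by decide) (by rw [hB1, hB2]; exact hadj_uv)
    exact this
  have H2 : ∀ x ∈ convexHull ℝ (↑P : Set Pt), 0 ≤ B.coord 2 x := by
    have := coord_nonneg_of_edge P hgp hne B hBP 0 1 2 (by decide) (by decide)
      (by decide) (by rw [hB0, hB1]; exact hadj_tu)
    exact this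
  -- the middle coordinate of any hull vertex distinct from t, u, v is negative
  have key : ∀ p : Pt, IsHullVertex (↑P : Set Pt) p → p ≠ t → p ≠ u → p ≠ v →
      B.coord 1 p < 0 := by
    intro p hv hpt hpu hpv
    refine coord_one_neg_of_vertex P B hBP hv ?_
      (H0 p (subset_convexHull ℝ _ hv.1)) (H2 p (subset_convexHull ℝ _ hv.1))
    intro m
    fin_cases m
    · exact fun h => hpt h.symm
    · exact fun h => hpu h.symm
    · exact fun h => hpv h.symm
  have hzneg : B.coord 1 z < 0 := key z hadj_az.2.2.1 hzt hzu hzv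
  -- neighbours of z are not u
  have hau : a ≠ u := by
    intro h
    subst h
    exact no_three_neighbors P hgp hne hadj_tu hadj_uv hadj_az htv hzt hzv
  have hbu : b ≠ u := by
    intro h
    subst h
    have hadj_uz : AdjacentVertices (↑P : Set Pt) b z :=
      ⟨hzb.symm, hadj_zb.2.2.1, hadj_zb.2.1, by rw [segment_symm]; exact hadj_zb.2.2.2⟩
    exact no_three_neighbors P hgp hne hadj_tu hadj_uv hadj_uz htv hzt hzv
  -- the middle coordinate is nonpositive on a and b
  have hcoord_nonpos : ∀ p : Pt, IsHullVertex (↑P : Set Pt) p → p ≠ u → B.coord 1 p ≤ 0 := by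
    intro p hv hpu
    by_cases hpt : p = t
    · subst hpt
      rw [← hB0, B.coord_apply_ne (by decide)]
    by_cases hpv : p = v
    · subst hpv
      rw [← hB2, B.coord_apply_ne (by decide)]
    exact (key p hv hpt hpu hpv).le
  have haneg : B.coord 1 a ≤ 0 := hcoord_nonpos a hadj_az.2.1 hau
  have hbneg : B.coord 1 b ≤ 0 := hcoord_nonpos b hadj_zb.2.2.1 hbu
  -- now prove disjointness of the interiors
  rw [Set.disjoint_left]
  intro x hxu hxz
  rw [← range_mkBasis hcol, AffineBasis.interior_convexHull] at hxu
  rw [← range_mkBasis hcolz, AffineBasis.interior_convexHull] at hxz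
  have hxpos : 0 < B.coord 1 x := hxu 1
  have hw0 : 0 < C.coord 0 x := hxz 0
  have hw1 : 0 < C.coord 1 x := hxz 1
  have hw2 : 0 < C.coord 2 x := hxz 2
  have hev : B.coord 1 x = C.coord 0 x * B.coord 1 a + C.coord 1 x * B.coord 1 z
      + C.coord 2 x * B.coord 1 b := by
    have := eval_affine C (B.coord 1) x
    rw [Fin.sum_univ_three, hC0, hC1, hC2] at this
    linarith [this]
  nlinarith [hev, hxpos, hw0, hw1, hw2, hzneg, haneg, hbneg,
    mul_nonpos_of_nonneg_of_nonpos hw0.le haneg,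
    mul_nonpos_of_nonneg_of_nonpos hw2.le hbneg,
    mul_neg_of_pos_of_neg hw1 hzneg]
end
end

section
/- Let P be a finite set of points in the plane. Define the convex layers of P recursively: layer 1 consists of the vertices of CH(P), and layer k consists of the vertices of the convex hull of the points remaining after removing layers 1 through k−1. If p lies on layer k and q ≠ p is any other point of P, then in the convex layer decomposition of P \ {q}, the point p lies on layer k−1 or layer k. -/
open Set MeasureTheory

noncomputable section

/-- Points remaining after peeling the first `k` convex layers. -/
def peelResidual (S : Set Pt) : ℕ → Set Pt
  | 0 => S
  | k + 1 => peelResidual S k \ {p | IsHullVertex (peelResidual S k) p}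

/-- The `k`-th convex layer (0-indexed: `onionLayer S 0` is the outermost layer). -/
def onionLayer (S : Set Pt) (k : ℕ) : Set Pt :=
  {p | IsHullVertex (peelResidual S k) p}

/-- Exchange lemma: pure convexity. -/
lemma exchange_mem {S : Set Pt} {x q : Pt} (hxq : x ≠ q)
    (hx : x ∈ convexHull ℝ (insert q S)) (hq : q ∈ convexHull ℝ (insert x S)) :
    x ∈ convexHull ℝ S := by
  rcases S.eq_empty_or_nonempty with rfl | hS
  · rw [insert_empty_eq, convexHull_singleton, mem_singleton_iff] at hx
    exact absurd hx hxq
  rw [convexHull_insert hS, mem_convexJoin] at hx hq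
  obtain ⟨q', hq', s0, hs0, hxseg⟩ := hx
  obtain ⟨x', hx', s1, hs1, hqseg⟩ := hq
  rw [mem_singleton_iff] at hq' hx'
  rw [hq'] at hxseg
  rw [hx'] at hqseg
  obtain ⟨a, b, ha, hb, hab, h1⟩ := hxseg
  obtain ⟨c, d, hc, hd, hcd, h2⟩ := hqseg
  by_cases ha1 : a = 1
  · exfalso; apply hxq
    have hb0 : b = 0 := by linarith
    rw [ha1, hb0] at h1
    simpa using h1.symm
  have hc1 : c ≤ 1 := by linarith
  have haclt : a * c ≤ a := mul_le_of_le_one_right ha hc1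
  have ht : (0:ℝ) < 1 - a * c := by
    have : a < 1 := lt_of_le_of_ne (by linarith) ha1
    linarith
  have key : (1 - a * c) • x = (a * d) • s1 + b • s0 := by
    have h2' : (a * c) • x + (a * d) • s1 = a • q := by
      have := congrArg (fun z => a • z) h2
      simpa [smul_add, smul_smul] using this
    calc (1 - a * c) • x = x - (a * c) • x := by rw [sub_smul, one_smul]
      _ = (a • q + b • s0) - (a * c) • x := by rw [h1]
      _ = (a * d) • s1 + b • s0 := by rw [← h2']; abel
  have hsum : (1 - a * c)⁻¹ * (a * d) + (1 - a * c)⁻¹ * b = 1 := by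
    have h3 : a * d + b = 1 - a * c := by linear_combination a * hcd + hab
    field_simp
    linarith
  have hmem := (convex_convexHull ℝ S) hs1 hs0
    (mul_nonneg (inv_nonneg.mpr ht.le) (mul_nonneg ha hd))
    (mul_nonneg (inv_nonneg.mpr ht.le) hb) hsum
  have hxeq : x = ((1 - a * c)⁻¹ * (a * d)) • s1 + ((1 - a * c)⁻¹ * b) • s0 := by
    conv_lhs => rw [show x = (1 - a * c)⁻¹ • ((1 - a * c) • x) from by
      rw [smul_smul, inv_mul_cancel₀ ht.ne', one_smul]]
    rw [key, smul_add, smul_smul, smul_smul]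
  rw [hxeq]; exact hmem

/-- Removing a non-vertex point `q` does not change whether `x` is in the hull
of the rest. -/
lemma erase_hull_iff {S : Set Pt} {q x : Pt} (hq : q ∈ convexHull ℝ (S \ {q}))
    (hxq : x ≠ q) :
    x ∈ convexHull ℝ ((S \ {q}) \ {x}) ↔ x ∈ convexHull ℝ (S \ {x}) := by
  constructor
  · exact fun h => convexHull_mono (diff_subset_diff_left diff_subset) h
  · intro hx
    set T := (S \ {q}) \ {x} with hT
    have h1 : S \ {x} ⊆ insert q T := by
      intro y hy
      simp only [hT, mem_insert_iff, mem_diff, mem_singleton_iff] at hy ⊢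
      tauto
    have h2 : S \ {q} ⊆ insert x T := by
      intro y hy
      simp only [hT, mem_insert_iff, mem_diff, mem_singleton_iff] at hy ⊢
      tauto
    by_cases hqT : q ∈ convexHull ℝ T
    · have hsub : insert q T ⊆ convexHull ℝ T := insert_subset hqT (subset_convexHull ℝ T)
      exact convexHull_min hsub (convex_convexHull ℝ T) (convexHull_mono h1 hx)
    · exact exchange_mem hxq (convexHull_mono h1 hx) (convexHull_mono h2 hq)

lemma vertex_mono {A B : Set Pt} (hAB : A ⊆ B) {p : Pt} (hpA : p ∈ A)
    (hp : IsHullVertex B p) : IsHullVertex A p :=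
  ⟨hpA, fun h => hp.2 (convexHull_mono (diff_subset_diff_left hAB) h)⟩

lemma mem_peel_succ {S : Set Pt} {k : ℕ} {x : Pt} :
    x ∈ peelResidual S (k + 1) ↔
      x ∈ peelResidual S k ∧ ¬ IsHullVertex (peelResidual S k) x := Iff.rfl

lemma peel_subset (S : Set Pt) (k : ℕ) : peelResidual S (k + 1) ⊆ peelResidual S k :=
  fun _ hx => (mem_peel_succ.mp hx).1

lemma nonvertex_hull {S : Set Pt} {k : ℕ} {x : Pt} (hx : x ∈ peelResidual S (k + 1)) :
    x ∈ convexHull ℝ (peelResidual S k \ {x}) := by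
  obtain ⟨h1, h2⟩ := mem_peel_succ.mp hx
  by_contra h
  exact h2 ⟨h1, h⟩

lemma key_inv (S : Set Pt) (q : Pt) : ∀ k : ℕ,
    peelResidual (S \ {q}) k ⊆ peelResidual S k ∧
    peelResidual S (k + 1) \ {q} ⊆ peelResidual (S \ {q}) k ∧
    (q ∈ peelResidual S (k + 1) → peelResidual (S \ {q}) k = peelResidual S k \ {q}) := by
  intro k
  induction k with
  | zero =>
    exact ⟨diff_subset, diff_subset_diff_left (peel_subset S 0), fun _ => rfl⟩
  | succ k ih =>
    obtain ⟨hA, hB, hC⟩ := ih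
    have hA1 : peelResidual (S \ {q}) (k + 1) ⊆ peelResidual S (k + 1) := by
      intro x hx
      obtain ⟨hx1, hx2⟩ := mem_peel_succ.mp hx
      exact mem_peel_succ.mpr ⟨hA hx1, fun hv => hx2 (vertex_mono hA hx1 hv)⟩
    refine ⟨hA1, ?_, ?_⟩
    · rintro x ⟨hx2, hxq⟩
      rw [mem_singleton_iff] at hxq
      have hx1 : x ∈ peelResidual S (k + 1) := peel_subset S (k + 1) hx2
      have hxhull : x ∈ convexHull ℝ (peelResidual S (k + 1) \ {x}) := nonvertex_hull hx2
      have hxR' : x ∈ peelResidual (S \ {q}) k := hB ⟨hx1, by simpa using hxq⟩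
      refine mem_peel_succ.mpr ⟨hxR', fun hv => hv.2 ?_⟩
      by_cases hqk : q ∈ peelResidual S (k + 1)
      · rw [hC hqk]
        have hqhull : q ∈ convexHull ℝ (peelResidual S k \ {q}) := nonvertex_hull hqk
        have hx_in_Sk : x ∈ convexHull ℝ (peelResidual S k \ {x}) :=
          convexHull_mono (diff_subset_diff_left (peel_subset S k)) hxhull
        exact (erase_hull_iff hqhull hxq).mpr hx_in_Sk
      · refine convexHull_mono ?_ hxhull
        rintro y ⟨hy1, hy2⟩
        refine ⟨hB ⟨hy1, ?_⟩, hy2⟩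
        simp only [mem_singleton_iff]
        rintro rfl
        exact hqk hy1
    · intro hq2
      have hq1 : q ∈ peelResidual S (k + 1) := peel_subset S (k + 1) hq2
      have hCk := hC hq1
      have hqhull : q ∈ convexHull ℝ (peelResidual S k \ {q}) := nonvertex_hull hq1
      show peelResidual (S \ {q}) k \ {p | IsHullVertex (peelResidual (S \ {q}) k) p}
          = peelResidual S (k + 1) \ {q}
      rw [hCk]
      ext x
      simp only [mem_diff, mem_setOf_eq, mem_singleton_iff, mem_peel_succ]
      constructor
      · rintro ⟨⟨hxk, hxq⟩, hnv⟩
        refine ⟨⟨hxk, fun hv => hnv ?_⟩, hxq⟩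
        exact ⟨⟨hxk, fun h => hxq (by simpa using h)⟩,
          fun hh => hv.2 ((erase_hull_iff hqhull hxq).mp hh)⟩
      · rintro ⟨⟨hxk, hnv⟩, hxq⟩
        refine ⟨⟨hxk, hxq⟩, fun hv => hnv ?_⟩
        exact ⟨hxk, fun hh => hv.2 ((erase_hull_iff hqhull hxq).mpr hh)⟩

theorem layer_monotone_under_deletion (P : Finset Pt) (p q : Pt) (k : ℕ)
    (hq : q ∈ P) (hqp : q ≠ p) (hp : p ∈ onionLayer (↑P : Set Pt) k) :
    p ∈ onionLayer ((↑P : Set Pt) \ {q}) k ∨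
      p ∈ onionLayer ((↑P : Set Pt) \ {q}) (k - 1) := by
  have hpq : p ≠ q := fun h => hqp h.symm
  have hp' : IsHullVertex (peelResidual (↑P : Set Pt) k) p := hp
  obtain ⟨hpR, hpnv⟩ := hp'
  cases k with
  | zero =>
    left
    have hpmem : p ∈ (↑P : Set Pt) \ {q} := ⟨hpR, by simpa using hpq⟩
    exact vertex_mono diff_subset hpmem ⟨hpR, hpnv⟩
  | succ j =>
    obtain ⟨-, hB', -⟩ := key_inv (↑P : Set Pt) q j
    obtain ⟨hA1, -, -⟩ := key_inv (↑P : Set Pt) q (j + 1)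
    have hpRj : p ∈ peelResidual ((↑P : Set Pt) \ {q}) j := hB' ⟨hpR, by simpa using hpq⟩
    by_cases hcase : p ∈ peelResidual ((↑P : Set Pt) \ {q}) (j + 1)
    · left
      exact vertex_mono hA1 hcase ⟨hpR, hpnv⟩
    · right
      show p ∈ onionLayer ((↑P : Set Pt) \ {q}) (j + 1 - 1)
      rw [Nat.add_sub_cancel]
      show IsHullVertex (peelResidual ((↑P : Set Pt) \ {q}) j) p
      by_contra h
      exact hcase (mem_peel_succ.mpr ⟨hpRj, h⟩)
end
end

section
/- Let (t, u, v) be consecutive vertices on the convex hull of a finite planar point set P in general position, and let z be a hull vertex with z ∉ {t, u, v}. Then the set of points active for z is unchanged by the deletion of u: a point p is a vertex of CH(P \ {z}) but not of CH(P) if and only if p is a vertex of CH((P \ {u}) \ {z}) but not of CH(P \ {u}). -/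
open Set MeasureTheory

noncomputable section

section Aux

lemma exists_smul_of_cross {d w : Pt} (hd : d ≠ 0) (h : d 0 * w 1 - d 1 * w 0 = 0) :
    ∃ r : ℝ, w = r • d := by
  have hne : d 0 ≠ 0 ∨ d 1 ≠ 0 := by
    by_contra hc; push_neg at hc
    exact hd (by ext i; fin_cases i <;> simp [hc.1, hc.2])
  rcases hne with h0 | h1
  · refine ⟨w 0 / d 0, ?_⟩
    ext i; fin_cases i <;> simp only [PiLp.smul_apply, smul_eq_mul, Fin.zero_eta, Fin.mk_one]
    · field_simp
    · field_simp; nlinarith [h]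
  · refine ⟨w 1 / d 1, ?_⟩
    ext i; fin_cases i <;> simp only [PiLp.smul_apply, smul_eq_mul, Fin.zero_eta, Fin.mk_one]
    · field_simp; nlinarith [h]
    · field_simp

lemma collinear_of_cross2 {t u v : Pt} (h : cross2 (u - t) (v - t) = 0) :
    Collinear ℝ ({t, u, v} : Set Pt) := by
  rw [collinear_iff_of_mem (Set.mem_insert t {u, v})]
  by_cases htu : u = t
  · refine ⟨v - t, ?_⟩
    rintro p (rfl | rfl | rfl)
    · exact ⟨0, by simp⟩
    · exact ⟨0, by simp [htu]⟩
    · exact ⟨1, by simp⟩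
  · refine ⟨u - t, ?_⟩
    rintro p (rfl | rfl | rfl)
    · exact ⟨0, by simp⟩
    · exact ⟨1, by simp⟩
    · have h' : (u - t) 0 * ((p - t) : Pt) 1 - (u - t) 1 * ((p - t) : Pt) 0 = 0 := by
        simpa [cross2] using h
      obtain ⟨r, hr⟩ := exists_smul_of_cross (sub_ne_zero.mpr htu) h'
      refine ⟨r, ?_⟩
      have : p - t = r • (u - t) := hr
      simp only [vadd_eq_add]
      linear_combination (norm := module) this

lemma interior_ne {G : Set Pt} {t u v : Pt} (ht : t ∈ G) (hu : u ∈ G) (hv : v ∈ G)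
    (hncol : ¬ Collinear ℝ ({t, u, v} : Set Pt)) :
    (interior (convexHull ℝ G)).Nonempty := by
  rw [interior_convexHull_nonempty_iff_affineSpan_eq_top]
  have hai : AffineIndependent ℝ ![t, u, v] := affineIndependent_iff_not_collinear_set.mpr hncol
  have htop : affineSpan ℝ (Set.range ![t, u, v]) = ⊤ := by
    rw [hai.affineSpan_eq_top_iff_card_eq_finrank_add_one]
    simp [finrank_euclideanSpace_fin]
  have hsub : Set.range ![t, u, v] ⊆ G := by
    rintro x ⟨i, rfl⟩; fin_cases i <;> simpa
  exact top_unique (htop ▸ affineSpan_mono ℝ hsub)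

lemma edge_support {G : Set Pt} {a b : Pt}
    (ha : a ∈ G) (hb : b ∈ G)
    (hseg : segment ℝ a b ⊆ frontier (convexHull ℝ G))
    (hne : (interior (convexHull ℝ G)).Nonempty) :
    ∃ g : Pt →L[ℝ] ℝ, g a = g b ∧ (∀ x ∈ convexHull ℝ G, g x ≤ g a) ∧
      (∀ x ∈ interior (convexHull ℝ G), g x < g a) := by
  set K := convexHull ℝ G with hK
  have hKconv : Convex ℝ K := convex_convexHull ℝ G
  set m : Pt := (1/2 : ℝ) • a + (1/2 : ℝ) • b with hm
  have hmseg : m ∈ segment ℝ a b := ⟨1/2, 1/2, by norm_num, by norm_num, by norm_num, rfl⟩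
  have hmfr : m ∈ frontier K := hseg hmseg
  have hmint : m ∉ interior K := fun h => hmfr.2 h
  obtain ⟨g, hg⟩ := geometric_hahn_banach_open_point (hKconv.interior) isOpen_interior hmint
  obtain ⟨c, hc⟩ := hne
  have hle : ∀ x ∈ K, g x ≤ g m := by
    intro x hx
    by_contra hgt
    push_neg at hgt
    set ε : ℝ := min ((g x - g m) / (2 * (g x - g c))) (1/2) with hε
    have hεint : ∀ e : ℝ, 0 < e → e < 1 → e • c + (1 - e) • x ∈ interior K :=
      fun e he0 he1 => hKconv.combo_interior_closure_mem_interior hc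
        (subset_closure hx) he0 (by linarith) (by ring)
    by_cases hcx : g x ≤ g c
    · have := hg _ (hεint (1/2) (by norm_num) (by norm_num))
      rw [map_add, _root_.map_smul, _root_.map_smul] at this
      simp only [smul_eq_mul] at this
      linarith
    · push_neg at hcx
      have hεpos : 0 < ε := lt_min (div_pos (by linarith) (by linarith)) (by norm_num)
      have hεlt : ε < 1 := lt_of_le_of_lt (min_le_right _ _) (by norm_num)
      have hεle : ε ≤ (g x - g m) / (2 * (g x - g c)) := min_le_left _ _
      have := hg _ (hεint ε hεpos hεlt)
      rw [map_add, _root_.map_smul, _root_.map_smul] at this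
      simp only [smul_eq_mul] at this
      have h1 : ε * (g x - g c) ≤ (g x - g m) / 2 := by
        rw [le_div_iff₀ (by linarith : (0:ℝ) < 2 * (g x - g c))] at hεle
        nlinarith
      nlinarith
  have hab : g a = g b := by
    have h1 : g a ≤ g m := hle a (subset_convexHull ℝ G ha)
    have h2 : g b ≤ g m := hle b (subset_convexHull ℝ G hb)
    have h3 : g m = (1/2 : ℝ) * g a + (1/2 : ℝ) * g b := by
      rw [hm, map_add, _root_.map_smul, _root_.map_smul]; simp
    linarith
  have hma : g m = g a := by
    have h3 : g m = (1/2 : ℝ) * g a + (1/2 : ℝ) * g b := by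
      rw [hm, map_add, _root_.map_smul, _root_.map_smul]; simp
    rw [h3, ← hab]; ring
  exact ⟨g, hab, fun x hx => hma ▸ hle x hx, fun x hx => hma ▸ hg x hx⟩

lemma apply_eq (g : Pt →L[ℝ] ℝ) (x : Pt) :
    g x = x 0 * g (EuclideanSpace.single 0 (1:ℝ)) + x 1 * g (EuclideanSpace.single 1 (1:ℝ)) := by
  have hx : x = x 0 • EuclideanSpace.single 0 (1:ℝ) + x 1 • EuclideanSpace.single 1 (1:ℝ) := by
    ext i; fin_cases i <;> simp [EuclideanSpace.single_apply]
  conv_lhs => rw [hx]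
  rw [map_add, _root_.map_smul, _root_.map_smul]; simp

lemma cross2_eq_zero_of_ker {g : Pt →L[ℝ] ℝ} {a b w c : Pt} (hgc : g c ≠ g a)
    (h1 : g b = g a) (h2 : g w = g a) : cross2 (b - a) (w - a) = 0 := by
  set p := g (EuclideanSpace.single 0 (1:ℝ)) with hp
  set q := g (EuclideanSpace.single 1 (1:ℝ)) with hq
  have hb' : p * (b - a) 0 + q * (b - a) 1 = 0 := by
    have : g (b - a) = 0 := by rw [map_sub, h1, sub_self]
    rw [apply_eq g (b - a)] at this; linarith
  have hw' : p * (w - a) 0 + q * (w - a) 1 = 0 := by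
    have : g (w - a) = 0 := by rw [map_sub, h2, sub_self]
    rw [apply_eq g (w - a)] at this; linarith
  have hpq : p ≠ 0 ∨ q ≠ 0 := by
    by_contra hc; push_neg at hc
    apply hgc
    have : g (c - a) = 0 := by
      rw [apply_eq g (c - a), ← hp, ← hq, hc.1, hc.2]; ring
    rw [map_sub] at this; linarith
  have h3 : p * cross2 (b - a) (w - a) = 0 := by
    simp only [cross2]; linear_combination ((w - a) 1) * hb' - ((b - a) 1) * hw'
  have h4 : q * cross2 (b - a) (w - a) = 0 := by
    simp only [cross2]; linear_combination (-((w - a) 0)) * hb' + ((b - a) 0) * hw'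
  rcases hpq with hp0 | hq0
  · exact (mul_eq_zero.mp h3).resolve_left hp0
  · exact (mul_eq_zero.mp h4).resolve_left hq0

lemma pierce {G : Set Pt} {zz : Pt} (hz : zz ∈ G) (L : Pt →ₗ[ℝ] ℝ) {c : ℝ}
    (hzc : L zz < c)
    (hline : ∀ y ∈ convexHull ℝ G, L y = c → y ∈ convexHull ℝ (G \ {zz}))
    {x : Pt} (hx : x ∈ convexHull ℝ G) (hxc : c ≤ L x) :
    x ∈ convexHull ℝ (G \ {zz}) := by
  have hGne : (G \ {zz}).Nonempty := by
    rcases Set.eq_empty_or_nonempty (G \ {zz}) with he | hne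
    · exfalso
      have hsub : G ⊆ {zz} := by
        intro y hy
        by_contra hyz
        exact (Set.eq_empty_iff_forall_notMem.mp he) y ⟨hy, hyz⟩
      have := convexHull_mono hsub hx
      rw [convexHull_singleton] at this
      rw [Set.mem_singleton_iff.mp this] at hxc
      linarith
    · exact hne
  have hins : insert zz (G \ {zz}) = G := by
    rw [Set.insert_diff_singleton]; exact Set.insert_eq_self.mpr hz
  have hx' : x ∈ convexHull ℝ (insert zz (G \ {zz})) := by rw [hins]; exact hx
  rw [convexHull_insert hGne, mem_convexJoin] at hx'
  obtain ⟨z', hz', y, hy, hseg⟩ := hx'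
  rw [Set.mem_singleton_iff.mp hz'] at hseg
  obtain ⟨a, b, ha, hb, hab, hxe⟩ := hseg
  have hLx : L x = a * L zz + b * L y := by
    rw [← hxe, map_add, _root_.map_smul, _root_.map_smul]; simp
  by_cases ha0 : a = 0
  · have hb1 : b = 1 := by linarith
    have : x = y := by rw [← hxe, ha0, hb1]; simp
    rw [this]; exact hy
  · have hapos : 0 < a := lt_of_le_of_ne ha (Ne.symm ha0)
    have hbpos : 0 < b := by
      rcases lt_or_eq_of_le hb with h | h
      · exact h
      · exfalso; rw [← h] at hab hLx; simp at hLx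
        have ha1 : a = 1 := by linarith
        rw [ha1, one_mul] at hLx; linarith
    have hLy : c < L y := by
      by_contra hcy
      push_neg at hcy
      have k1 : a * L zz < a * c := mul_lt_mul_of_pos_left hzc hapos
      have k2 : b * L y ≤ b * c := mul_le_mul_of_nonneg_left hcy hb
      have hexp : a * c + b * c = c := by rw [← add_mul, hab, one_mul]
      linarith
    set s : ℝ := (L y - c) / (L y - L zz) with hs
    have hden : 0 < L y - L zz := by linarith
    have hspos : 0 < s := div_pos (by linarith) hden
    have hs1 : s < 1 := by rw [hs, div_lt_one hden]; linarith
    set m : Pt := s • zz + (1 - s) • y with hm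
    have hmK : m ∈ convexHull ℝ G :=
      (convex_convexHull ℝ G).segment_subset (subset_convexHull ℝ G hz)
        (convexHull_mono Set.diff_subset hy)
        ⟨s, 1 - s, le_of_lt hspos, by linarith, by ring, rfl⟩
    have hLm : L m = c := by
      rw [hm, map_add, _root_.map_smul, _root_.map_smul]
      simp only [smul_eq_mul]
      rw [hs]; field_simp; ring
    have hmmem : m ∈ convexHull ℝ (G \ {zz}) := hline m hmK hLm
    have hb' : b = 1 - a := by linarith
    have hale : a ≤ s := by
      have key : c ≤ a * L zz + b * L y := by linarith
      rw [hb'] at key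
      rw [hs, le_div_iff₀ hden]
      nlinarith [key]
    have hl1 : a / s ≤ 1 := by rw [div_le_one hspos]; exact hale
    have hl0 : 0 ≤ a / s := le_of_lt (div_pos hapos hspos)
    have hxid : (a / s) • m + (1 - a / s) • y = x := by
      have h2 : L y - c ≠ 0 := ne_of_gt (by linarith)
      have h3 : L y - L zz ≠ 0 := ne_of_gt hden
      rw [hm, ← hxe, hb']
      match_scalars
      · field_simp
      · field_simp; ring
    exact (convex_convexHull ℝ (G \ {zz})).segment_subset hmmem hy
      ⟨a / s, 1 - a / s, hl0, by linarith, by ring, hxid⟩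

end Aux
def crossLin (a : Pt) : Pt →ₗ[ℝ] ℝ where
  toFun x := cross2 x a
  map_add' x y := by simp [cross2, PiLp.add_apply]; ring
  map_smul' c x := by simp [cross2, PiLp.smul_apply, smul_eq_mul]; ring

lemma crossLin_apply (a x : Pt) : crossLin a x = cross2 x a := rfl

lemma diff_swap (s : Set Pt) (a b : Pt) : (s \ {a}) \ {b} = (s \ {b}) \ {a} := by
  rw [Set.diff_diff, Set.diff_diff, Set.union_comm]

lemma edge_transfer {G' G : Set Pt} (hsub : G' ⊆ G) {a b : Pt} (ha : a ∈ G') (hb : b ∈ G')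
    (hseg : segment ℝ a b ⊆ frontier (convexHull ℝ G)) :
    segment ℝ a b ⊆ frontier (convexHull ℝ G') := by
  intro x hx
  have hxK : x ∈ convexHull ℝ G' :=
    (convex_convexHull ℝ G').segment_subset (subset_convexHull ℝ G' ha)
      (subset_convexHull ℝ G' hb) hx
  exact ⟨subset_closure hxK, fun hi => (hseg hx).2 (interior_mono (convexHull_mono hsub) hi)⟩

lemma edge_pair {G : Set Pt} {t u v : Pt}
    (ht : t ∈ G) (hu : u ∈ G) (hv : v ∈ G)
    (hncol : ¬ Collinear ℝ ({t, u, v} : Set Pt))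
    (e1 : segment ℝ t u ⊆ frontier (convexHull ℝ G))
    (e2 : segment ℝ u v ⊆ frontier (convexHull ℝ G)) :
    ∃ g h : Pt →L[ℝ] ℝ, (∀ x ∈ convexHull ℝ G, g x ≤ g t) ∧ g u = g t ∧ g v < g t ∧
      (∀ x ∈ convexHull ℝ G, h x ≤ h v) ∧ h u = h v ∧ h t < h v := by
  have hne := interior_ne ht hu hv hncol
  obtain ⟨g, hgtu, hgle, hgstrict⟩ := edge_support ht hu e1 hne
  obtain ⟨h, hhuv, hhle, hhstrict⟩ := edge_support hu hv e2 hne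
  obtain ⟨cpt, hcpt⟩ := hne
  have hgv : g v < g t := by
    rcases lt_or_eq_of_le (hgle v (subset_convexHull ℝ G hv)) with hlt | heq
    · exact hlt
    · exact absurd (collinear_of_cross2
        (cross2_eq_zero_of_ker (ne_of_lt (hgstrict cpt hcpt)) hgtu.symm heq)) hncol
  have hht : h t < h u := by
    rcases lt_or_eq_of_le (hhle t (subset_convexHull ℝ G ht)) with hlt | heq
    · exact hlt
    · exfalso
      have hcol : Collinear ℝ ({u, v, t} : Set Pt) := collinear_of_cross2
        (cross2_eq_zero_of_ker (ne_of_lt (hhstrict cpt hcpt)) hhuv.symm heq)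
      exact hncol (hcol.subset (by intro x hx; simp at hx ⊢; tauto))
  refine ⟨g, h, hgle, hgtu.symm, hgv, ?_, hhuv, ?_⟩
  · intro x hx; rw [← hhuv]; exact hhle x hx
  · rw [← hhuv]; exact hht

lemma line_cap {G : Set Pt} {t u v : Pt} (htv : t ≠ v)
    (ht : t ∈ G) (hu : u ∈ G) (hv : v ∈ G)
    (hncol : ¬ Collinear ℝ ({t, u, v} : Set Pt))
    (e1 : segment ℝ t u ⊆ frontier (convexHull ℝ G))
    (e2 : segment ℝ u v ⊆ frontier (convexHull ℝ G))
    {x : Pt} (hx : x ∈ convexHull ℝ G)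
    (hl : cross2 (x - t) (v - t) = 0) : x ∈ segment ℝ t v := by
  obtain ⟨g, h, hgle, hgut, hgv, hhle, hhuv, hht⟩ := edge_pair ht hu hv hncol e1 e2
  obtain ⟨s, hr⟩ := exists_smul_of_cross (d := v - t) (w := x - t)
    (sub_ne_zero.mpr (Ne.symm htv)) (by simp only [cross2] at hl ⊢; linarith)
  have hgx : g x - g t = s * (g v - g t) := by
    have h1 : g (x - t) = s * g (v - t) := by rw [hr, _root_.map_smul]; simp
    rw [map_sub, map_sub] at h1; linarith
  have hhx : h x - h t = s * (h v - h t) := by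
    have h1 : h (x - t) = s * h (v - t) := by rw [hr, _root_.map_smul]; simp
    rw [map_sub, map_sub] at h1; linarith
  have hs0 : 0 ≤ s := by
    by_contra hs; push_neg at hs
    have := mul_pos_of_neg_of_neg hs (sub_neg.mpr hgv)
    have hxle := hgle x hx
    linarith
  have hs1 : s ≤ 1 := by
    by_contra hs; push_neg at hs
    have h2 : (1:ℝ) * (h v - h t) < s * (h v - h t) :=
      mul_lt_mul_of_pos_right hs (sub_pos.mpr hht)
    have hxle := hhle x hx
    linarith
  refine ⟨1 - s, s, by linarith, hs0, by ring, ?_⟩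
  linear_combination (norm := module) -hr

lemma triangle_cap {G : Set Pt} {t u v : Pt}
    (ht : t ∈ G) (hu : u ∈ G) (hv : v ∈ G)
    (hncol : ¬ Collinear ℝ ({t, u, v} : Set Pt))
    (e1 : segment ℝ t u ⊆ frontier (convexHull ℝ G))
    (e2 : segment ℝ u v ⊆ frontier (convexHull ℝ G))
    {x : Pt} (hx : x ∈ convexHull ℝ G)
    (hside : 0 ≤ cross2 (x - t) (v - t) / cross2 (u - t) (v - t)) :
    x ∈ convexHull ℝ ({t, u, v} : Set Pt) := by
  obtain ⟨g, h, hgle, hgut, hgv, hhle, hhuv, hht⟩ := edge_pair ht hu hv hncol e1 e2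
  have hD : cross2 (u - t) (v - t) ≠ 0 := fun h0 => hncol (collinear_of_cross2 h0)
  set β : ℝ := cross2 (x - t) (v - t) / cross2 (u - t) (v - t) with hβdef
  set γ : ℝ := cross2 (u - t) (x - t) / cross2 (u - t) (v - t) with hγdef
  have hxt : x - t = β • (u - t) + γ • (v - t) := by
    ext i
    fin_cases i <;>
    · simp only [PiLp.add_apply, PiLp.smul_apply, smul_eq_mul, Fin.zero_eta, Fin.mk_one]
      rw [hβdef, hγdef]
      field_simp
      simp only [cross2, PiLp.sub_apply]
      ring
  have hsum : x = (1 - β - γ) • t + β • u + γ • v := by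
    linear_combination (norm := module) hxt
  have hβ0 : 0 ≤ β := hside
  have hgx : g x = (1 - β - γ) * g t + β * g u + γ * g v := by
    conv_lhs => rw [hsum]
    rw [map_add, map_add, _root_.map_smul, _root_.map_smul, _root_.map_smul]; simp
  have hhx : h x = (1 - β - γ) * h t + β * h u + γ * h v := by
    conv_lhs => rw [hsum]
    rw [map_add, map_add, _root_.map_smul, _root_.map_smul, _root_.map_smul]; simp
  have hγ0 : 0 ≤ γ := by
    by_contra hneg; push_neg at hneg
    have hp := mul_pos_of_neg_of_neg hneg (sub_neg.mpr hgv)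
    have hxle := hgle x hx
    rw [hgut] at hgx
    nlinarith
  have hα0 : 0 ≤ 1 - β - γ := by
    by_contra hneg; push_neg at hneg
    have hp := mul_pos_of_neg_of_neg hneg (sub_neg.mpr hht)
    have hxle := hhle x hx
    rw [hhuv] at hhx
    nlinarith
  have hK : Convex ℝ (convexHull ℝ ({t, u, v} : Set Pt)) := convex_convexHull ℝ _
  have htK : t ∈ convexHull ℝ ({t, u, v} : Set Pt) := subset_convexHull ℝ _ (by simp)
  have huK : u ∈ convexHull ℝ ({t, u, v} : Set Pt) := subset_convexHull ℝ _ (by simp)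
  have hvK : v ∈ convexHull ℝ ({t, u, v} : Set Pt) := subset_convexHull ℝ _ (by simp)
  set α : ℝ := 1 - β - γ with hαdef
  by_cases hαβ : α + β = 0
  · have hα' : α = 0 := by linarith
    have hβ' : β = 0 := by linarith
    have hγ' : γ = 1 := by rw [hαdef] at hα'; linarith
    have : x = v := by rw [hsum, hα', hβ', hγ']; simp
    rw [this]; exact hvK
  · have hαβpos : 0 < α + β := lt_of_le_of_ne (by linarith) (Ne.symm hαβ)
    have hy : (α / (α + β)) • t + (β / (α + β)) • u ∈ convexHull ℝ ({t, u, v} : Set Pt) :=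
      hK.segment_subset htK huK
        ⟨α / (α + β), β / (α + β), div_nonneg hα0 (le_of_lt hαβpos),
         div_nonneg hβ0 (le_of_lt hαβpos), by field_simp, rfl⟩
    have hxse : (α + β) • ((α / (α + β)) • t + (β / (α + β)) • u) + γ • v = x := by
      have hne : α + β ≠ 0 := hαβ
      rw [hsum]
      match_scalars
      · field_simp
      · field_simp
      · ring
    exact hK.segment_subset hy hvK
      ⟨α + β, γ, le_of_lt hαβpos, hγ0, by rw [hαdef]; ring, hxse⟩
lemma main_core {A : Set Pt} (hgp : GenPos A) {t u v z : Pt}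
    (hvt : IsHullVertex A t) (hvu : IsHullVertex A u) (hvv : IsHullVertex A v)
    (hvz : IsHullVertex A z)
    (htu : t ≠ u) (huv : u ≠ v) (htv : t ≠ v)
    (hzt : z ≠ t) (hzu : z ≠ u) (hzv : z ≠ v)
    (e1 : segment ℝ t u ⊆ frontier (convexHull ℝ A))
    (e2 : segment ℝ u v ⊆ frontier (convexHull ℝ A))
    {p : Pt} (hpA : p ∈ A) (hpch : p ∈ convexHull ℝ (A \ {p})) :
    (p ∉ convexHull ℝ ((A \ {p}) \ {z}) → p ∈ convexHull ℝ ((A \ {p}) \ {u})) ∧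
    (p ∈ convexHull ℝ ((A \ {p}) \ {u}) → p ∉ convexHull ℝ (((A \ {p}) \ {u}) \ {z}) →
      p ∉ convexHull ℝ ((A \ {p}) \ {z})) := by
  have hpt : p ≠ t := fun h => hvt.2 (h ▸ hpch)
  have hpu : p ≠ u := fun h => hvu.2 (h ▸ hpch)
  have hpv : p ≠ v := fun h => hvv.2 (h ▸ hpch)
  have hpz : p ≠ z := fun h => hvz.2 (h ▸ hpch)
  set S : Set Pt := A \ {p} with hSdef
  have tS : t ∈ S := ⟨hvt.1, by simpa using (Ne.symm hpt)⟩
  have uS : u ∈ S := ⟨hvu.1, by simpa using (Ne.symm hpu)⟩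
  have vS : v ∈ S := ⟨hvv.1, by simpa using (Ne.symm hpv)⟩
  have zS : z ∈ S := ⟨hvz.1, by simpa using (Ne.symm hpz)⟩
  have hncol : ¬ Collinear ℝ ({t, u, v} : Set Pt) :=
    hgp t u v hvt.1 hvu.1 hvv.1 htu huv htv
  have e1S : segment ℝ t u ⊆ frontier (convexHull ℝ S) :=
    edge_transfer Set.diff_subset tS uS e1
  have e2S : segment ℝ u v ⊆ frontier (convexHull ℝ S) :=
    edge_transfer Set.diff_subset uS vS e2
  have lineS : ∀ {x : Pt}, x ∈ convexHull ℝ S → cross2 (x - t) (v - t) = 0 →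
      x ∈ segment ℝ t v := fun hx hl => line_cap htv tS uS vS hncol e1S e2S hx hl
  have triS : ∀ {x : Pt}, x ∈ convexHull ℝ S →
      0 ≤ cross2 (x - t) (v - t) / cross2 (u - t) (v - t) →
      x ∈ convexHull ℝ ({t, u, v} : Set Pt) :=
    fun hx hs => triangle_cap tS uS vS hncol e1S e2S hx hs
  set D : ℝ := cross2 (u - t) (v - t) with hDdef
  have hD : D ≠ 0 := fun h0 => hncol (collinear_of_cross2 h0)
  set LB : Pt →ₗ[ℝ] ℝ := D⁻¹ • crossLin (v - t) with hLBdef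
  have hLB : ∀ x : Pt, LB x - LB t = cross2 (x - t) (v - t) / D := by
    intro x
    have h1 : crossLin (v - t) x - crossLin (v - t) t = cross2 (x - t) (v - t) := by
      simp only [crossLin_apply, cross2, PiLp.sub_apply]; ring
    rw [hLBdef]
    simp only [LinearMap.smul_apply, smul_eq_mul]
    rw [← mul_sub, h1, inv_mul_eq_div]
  have segsub : ∀ (W : Set Pt), t ∈ W → v ∈ W →
      segment ℝ t v ⊆ convexHull ℝ W := fun W htW hvW =>
    (convex_convexHull ℝ _).segment_subset (subset_convexHull ℝ _ htW)
      (subset_convexHull ℝ _ hvW)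
  have hBz : cross2 (z - t) (v - t) / D < 0 := by
    by_contra hge; push_neg at hge
    have hzK := triS (subset_convexHull ℝ S zS) hge
    have hzsub : ({t, u, v} : Set Pt) ⊆ A \ {z} := by
      intro x hx
      simp only [Set.mem_insert_iff, Set.mem_singleton_iff] at hx
      rcases hx with rfl | rfl | rfl
      · exact ⟨hvt.1, by simpa using (Ne.symm hzt)⟩
      · exact ⟨hvu.1, by simpa using (Ne.symm hzu)⟩
      · exact ⟨hvv.1, by simpa using (Ne.symm hzv)⟩
    exact hvz.2 (convexHull_mono hzsub hzK)
  -- removing u from a ground set W ⊆ S, on the side B ≤ 0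
  have xpu : ∀ {W : Set Pt}, W ⊆ S → u ∈ W → t ∈ W → v ∈ W → ∀ {x : Pt},
      x ∈ convexHull ℝ W → cross2 (x - t) (v - t) / D ≤ 0 →
      x ∈ convexHull ℝ (W \ {u}) := by
    intro W hWS huW htW hvW x hxW hxle
    refine pierce huW (-LB) (c := -(LB t)) ?_ ?_ hxW ?_
    · have h1 := hLB u
      rw [← hDdef, div_self hD] at h1
      simp only [LinearMap.neg_apply]
      linarith
    · intro y hyW hyc
      simp only [LinearMap.neg_apply, neg_eq_iff_eq_neg, neg_neg] at hyc
      have hy0 : cross2 (y - t) (v - t) / D = 0 := by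
        have := hLB y; rw [hyc] at this; linarith
      have hynum : cross2 (y - t) (v - t) = 0 := by
        rcases div_eq_zero_iff.mp hy0 with h | h
        · exact h
        · exact absurd h hD
      have hyS : y ∈ convexHull ℝ S := convexHull_mono hWS hyW
      exact segsub (W \ {u}) ⟨htW, by simpa using htu⟩ ⟨hvW, by simpa using (Ne.symm huv)⟩
        (lineS hyS hynum)
    · simp only [LinearMap.neg_apply]
      have := hLB x
      linarith
  -- removing z from a ground set W ⊆ S, on the side B ≥ 0
  have xpz : ∀ {W : Set Pt}, W ⊆ S → z ∈ W → t ∈ W → v ∈ W → ∀ {x : Pt},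
      x ∈ convexHull ℝ W → 0 ≤ cross2 (x - t) (v - t) / D →
      x ∈ convexHull ℝ (W \ {z}) := by
    intro W hWS hzW htW hvW x hxW hxge
    refine pierce hzW LB (c := LB t) ?_ ?_ hxW ?_
    · have h1 := hLB z
      linarith
    · intro y hyW hyc
      have hy0 : cross2 (y - t) (v - t) / D = 0 := by
        have := hLB y; rw [hyc] at this; linarith
      have hynum : cross2 (y - t) (v - t) = 0 := by
        rcases div_eq_zero_iff.mp hy0 with h | h
        · exact h
        · exact absurd h hD
      have hyS : y ∈ convexHull ℝ S := convexHull_mono hWS hyW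
      exact segsub (W \ {z}) ⟨htW, by simpa using (Ne.symm hzt)⟩ ⟨hvW, by simpa using (Ne.symm hzv)⟩
        (lineS hyS hynum)
    · have := hLB x
      linarith
  constructor
  · intro h2
    by_cases hb : 0 ≤ cross2 (p - t) (v - t) / D
    · exact absurd (xpz Set.Subset.rfl zS tS vS hpch hb) h2
    · push_neg at hb
      exact xpu Set.Subset.rfl uS tS vS hpch (le_of_lt hb)
  · intro h3 h2 hcon
    have hbp : 0 < cross2 (p - t) (v - t) / D := by
      by_contra hle; push_neg at hle
      have hmem := xpu (W := S \ {z}) Set.diff_subset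
        ⟨uS, by simpa using (Ne.symm hzu)⟩ ⟨tS, by simpa using (Ne.symm hzt)⟩
        ⟨vS, by simpa using (Ne.symm hzv)⟩ hcon hle
      rw [diff_swap] at hmem
      exact h2 hmem
    have hmem := xpz (W := S \ {u}) Set.diff_subset
      ⟨zS, by simpa using hzu⟩ ⟨tS, by simpa using htu⟩
      ⟨vS, by simpa using (Ne.symm huv)⟩ h3 (le_of_lt hbp)
    exact h2 hmem

theorem active_set_unchanged_for_nonneighbor (P : Finset Pt)
    (hgp : GenPos (↑P : Set Pt)) (t u v z : Pt)
    (hc : ConsecutiveCW (↑P : Set Pt) t u v)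
    (hz : IsHullVertex (↑P : Set Pt) z)
    (hzn : z ∉ ({t, u, v} : Set Pt)) (p : Pt) :
    ActiveFor (↑P : Set Pt) z p ↔ ActiveFor ((↑P : Set Pt) \ {u}) z p := by
  obtain ⟨⟨htu, hvt, hvu, e1⟩, hadj2, htv, _⟩ := hc
  obtain ⟨huv, _, hvv, e2⟩ := hadj2
  have hzn' : z ≠ t ∧ z ≠ u ∧ z ≠ v := by
    simp only [Set.mem_insert_iff, Set.mem_singleton_iff] at hzn
    push_neg at hzn
    exact hzn
  obtain ⟨hzt, hzu, hzv⟩ := hzn'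
  set A : Set Pt := (↑P : Set Pt) with hAdef
  constructor
  · rintro ⟨⟨⟨hpA, hpz1⟩, hpv1⟩, hpv2⟩
    have hpch : p ∈ convexHull ℝ (A \ {p}) := by
      by_contra hno; exact hpv2 ⟨hpA, hno⟩
    have core := main_core hgp hvt hvu hvv hz htu huv htv hzt hzu hzv e1 e2 hpA hpch
    have hpu : p ≠ u := fun h => hvu.2 (h ▸ hpch)
    have hpz : p ≠ z := fun h => hz.2 (h ▸ hpch)
    have h2 : p ∉ convexHull ℝ ((A \ {p}) \ {z}) := by
      rw [diff_swap A p z]; exact hpv1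
    have hkey := core.1 h2
    refine ⟨⟨⟨⟨hpA, by simpa using hpu⟩, by simpa using hpz⟩, ?_⟩, ?_⟩
    · intro hmem
      apply hpv1
      refine convexHull_mono ?_ hmem
      intro x hx
      exact ⟨⟨hx.1.1.1, hx.1.2⟩, hx.2⟩
    · rintro ⟨_, hnot⟩
      apply hnot
      rw [diff_swap A u p]
      exact hkey
  · rintro ⟨⟨⟨⟨hpA, hpu1⟩, hpz1⟩, hpv1⟩, hpv2⟩
    have hpz : p ≠ z := by simpa using hpz1
    have hpchu : p ∈ convexHull ℝ ((A \ {u}) \ {p}) := by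
      by_contra hno; exact hpv2 ⟨⟨hpA, hpu1⟩, hno⟩
    have hsubA : (A \ {u}) \ {p} ⊆ A \ {p} := fun x hx => ⟨hx.1.1, hx.2⟩
    have hpch : p ∈ convexHull ℝ (A \ {p}) := convexHull_mono hsubA hpchu
    have core := main_core hgp hvt hvu hvv hz htu huv htv hzt hzu hzv e1 e2 hpA hpch
    have h3 : p ∈ convexHull ℝ ((A \ {p}) \ {u}) := by
      rw [← diff_swap A u p]; exact hpchu
    have h2 : p ∉ convexHull ℝ (((A \ {p}) \ {u}) \ {z}) := by
      have hset : ((A \ {u}) \ {z}) \ {p} = ((A \ {p}) \ {u}) \ {z} := by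
        rw [diff_swap (A \ {u}) z p, diff_swap A u p]
      rw [← hset]; exact hpv1
    have hres := core.2 h3 h2
    refine ⟨⟨⟨hpA, by simpa using hpz⟩, ?_⟩, ?_⟩
    · rw [diff_swap A z p]; exact hres
    · rintro ⟨_, hnot⟩; exact hnot hpch
end
end

section
/- Let (t, u, v) be consecutive clockwise vertices on the convex hull of a finite planar point set P in general position, and let p be a point active for u but not active for v. After deleting v, let v′ denote the new clockwise hull-neighbor of u on CH(P \ {v}). Then p lies strictly inside the triangle t u v′. -/
open Set MeasureTheory

noncomputable section

def triBasis {a b c : Pt} (h : AffineIndependent ℝ ![a,b,c]) : AffineBasis (Fin 3) ℝ Pt :=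
  ⟨![a,b,c], h, by
    rw [h.affineSpan_eq_top_iff_card_eq_finrank_add_one]
    simp⟩

lemma basis_eval (b : AffineBasis (Fin 3) ℝ Pt) (F : Pt →ᵃ[ℝ] ℝ) (x : Pt) :
    F x = ∑ j, b.coord j x * F (b j) := by
  conv_lhs => rw [← b.affineCombination_coord_eq_self x]
  rw [Finset.map_affineCombination _ _ _ (b.sum_coord_apply_eq_one x),
    Finset.affineCombination_eq_linear_combination _ _ _ (b.sum_coord_apply_eq_one x)]
  simp [smul_eq_mul]

lemma vanish_of_triple {a b c : Pt} (hnc : ¬ Collinear ℝ ({a,b,c} : Set Pt))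
    {F : Pt →ᵃ[ℝ] ℝ} (ha : F a = 0) (hb : F b = 0) (hc : F c = 0) (x : Pt) : F x = 0 := by
  have hInd : AffineIndependent ℝ ![a,b,c] := affineIndependent_iff_not_collinear_set.2 hnc
  rw [basis_eval (triBasis hInd) F x, Fin.sum_univ_three]
  show _ * F a + _ * F b + _ * F c = 0
  rw [ha, hb, hc]; ring

lemma coord_pos (b : AffineBasis (Fin 3) ℝ Pt) (i : Fin 3) (h : Pt →ᵃ[ℝ] ℝ)
    (hz : ∀ j, j ≠ i → h (b j) = 0) (hbi : 0 < h (b i)) {x : Pt} (hx : 0 < h x) :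
    0 < b.coord i x := by
  have he := basis_eval b h x
  rw [Fintype.sum_eq_single i (fun j hj => by rw [hz j hj, mul_zero])] at he
  nlinarith [he, hbi, hx]

lemma support_line {S : Set Pt} (hgp : GenPos S)
    (hspan : affineSpan ℝ S = ⊤) {a b : Pt} (hadj : AdjacentVertices S a b) :
    ∃ h : Pt →ᵃ[ℝ] ℝ, h a = 0 ∧ h b = 0 ∧ ∀ q ∈ S, q ≠ a → q ≠ b → 0 < h q := by
  obtain ⟨hab, hva, hvb, hseg⟩ := hadj
  have hconv : Convex ℝ (convexHull ℝ S) := convex_convexHull ℝ S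
  obtain ⟨w, hw⟩ : (interior (convexHull ℝ S)).Nonempty := by
    rw [interior_convexHull_nonempty_iff_affineSpan_eq_top]; exact hspan
  set m := midpoint ℝ a b with hm
  have hmfr : m ∈ frontier (convexHull ℝ S) := hseg (midpoint_mem_segment a b)
  have hmint : m ∉ interior (convexHull ℝ S) := fun h => hmfr.2 h
  obtain ⟨f, hf⟩ := geometric_hahn_banach_open_point hconv.interior isOpen_interior hmint
  have hle : ∀ q ∈ convexHull ℝ S, f q ≤ f m := by
    intro q hq
    by_contra hlt
    push_neg at hlt
    have hfw : f w < f m := hf w hw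
    rcases le_or_gt (f q) (f w) with h1 | h1
    · have : ((1:ℝ)/2) • w + ((1:ℝ)/2) • q ∈ interior (convexHull ℝ S) :=
        hconv.combo_interior_closure_mem_interior hw (subset_closure hq)
          (by norm_num) (by norm_num) (by norm_num)
      have := hf _ this
      simp only [map_add, f.map_smul, smul_eq_mul] at this
      linarith
    · set δ : ℝ := (f q - f m)/(f q - f w) with hδ
      have hδ0 : 0 < δ := by apply div_pos <;> linarith
      have hδ1 : δ < 1 := by rw [div_lt_one (by linarith)]; linarith
      have : δ • w + (1-δ) • q ∈ interior (convexHull ℝ S) :=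
        hconv.combo_interior_closure_mem_interior hw (subset_closure hq)
          hδ0 (by linarith) (by ring)
      have h2 := hf _ this
      simp only [map_add, f.map_smul, smul_eq_mul] at h2
      have : δ * (f q - f w) = f q - f m := by
        rw [hδ, div_mul_eq_mul_div, mul_div_assoc, div_self (by linarith), mul_one]
      nlinarith
  have happ : ∀ x : Pt, (AffineMap.const ℝ Pt (f m) - (f.toLinearMap).toAffineMap) x
      = f m - f x := fun x => rfl
  have hmab : f m = 2⁻¹ * (f a + f b) := by
    rw [hm, midpoint_eq_smul_add, f.map_smul, f.map_add, smul_eq_mul, invOf_eq_inv]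
  have hfa : f a ≤ f m := hle a (subset_convexHull ℝ S hva.1)
  have hfb : f b ≤ f m := hle b (subset_convexHull ℝ S hvb.1)
  refine ⟨AffineMap.const ℝ Pt (f m) - (f.toLinearMap).toAffineMap, by rw [happ]; linarith,
    by rw [happ]; linarith, ?_⟩
  intro q hqS hqa hqb
  rw [happ]
  rcases lt_or_eq_of_le (hle q (subset_convexHull ℝ S hqS)) with h1 | h1
  · linarith
  · exfalso
    have hcol : Collinear ℝ ({a, b, q} : Set Pt) := by
      by_contra hncol
      have hz := vanish_of_triple hncol
        (F := AffineMap.const ℝ Pt (f m) - (f.toLinearMap).toAffineMap)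
        (by rw [happ]; linarith) (by rw [happ]; linarith) (by rw [happ]; linarith) w
      rw [happ] at hz
      have := hf w hw
      linarith
    exact hgp a b q hva.1 hvb.1 hqS hab hqb.symm hqa.symm hcol

set_option maxHeartbeats 1000000

theorem still_in_triangle (P : Finset Pt)
    (hgp : GenPos (↑P : Set Pt)) (t u v v' p : Pt)
    (hc : ConsecutiveCW (↑P : Set Pt) t u v)
    (hpu : ActiveFor (↑P : Set Pt) u p)
    (hpv : ¬ ActiveFor (↑P : Set Pt) v p)
    (hc' : ConsecutiveCW ((↑P : Set Pt) \ {v}) t u v') :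
    p ∈ interior (convexHull ℝ ({t, u, v'} : Set Pt)) := by
  have htu : t ≠ u := hc.1.1
  have huv : u ≠ v := hc.2.1.1
  have htv : t ≠ v := hc.2.2.1
  have huv' : u ≠ v' := hc'.2.1.1
  have htv' : t ≠ v' := hc'.2.2.1
  have hvP_t : IsHullVertex (↑P : Set Pt) t := hc.1.2.1
  have hvP_u : IsHullVertex (↑P : Set Pt) u := hc.1.2.2.1
  have hvP_v : IsHullVertex (↑P : Set Pt) v := hc.2.1.2.2.1
  have hvQ_v' : IsHullVertex ((↑P : Set Pt) \ {v}) v' := hc'.2.1.2.2.1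
  have htP : t ∈ (↑P : Set Pt) := hvP_t.1
  have huP : u ∈ (↑P : Set Pt) := hvP_u.1
  have hvPm : v ∈ (↑P : Set Pt) := hvP_v.1
  have hv'P : v' ∈ (↑P : Set Pt) := hvQ_v'.1.1
  have hv'v : v' ≠ v := hvQ_v'.1.2
  have hpP : p ∈ (↑P : Set Pt) := hpu.1.1.1
  have hpune : p ≠ u := hpu.1.1.2
  have hpnv : ¬ IsHullVertex (↑P : Set Pt) p := hpu.2
  have hpt : p ≠ t := fun h => hpnv (h ▸ hvP_t)
  have hpv_ne : p ≠ v := fun h => hpnv (h ▸ hvP_v)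
  have hnvQp : ¬ IsHullVertex ((↑P : Set Pt) \ {v}) p := fun h => hpv ⟨h, hpnv⟩
  have hpv' : p ≠ v' := fun h => hnvQp (h ▸ hvQ_v')
  -- noncollinearity and basis
  have hncl : ¬ Collinear ℝ ({t, u, v'} : Set Pt) := hgp t u v' htP huP hv'P htu huv' htv'
  have hInd : AffineIndependent ℝ ![t, u, v'] := affineIndependent_iff_not_collinear_set.2 hncl
  set bb : AffineBasis (Fin 3) ℝ Pt := triBasis hInd with hbb
  have hrange : Set.range (bb : Fin 3 → Pt) = ({t, u, v'} : Set Pt) := by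
    show Set.range ![t, u, v'] = _
    ext x
    simp [Fin.exists_fin_two, Fin.exists_fin_succ]
    tauto
  -- spans
  have hspan3 : affineSpan ℝ ({t, u, v'} : Set Pt) = ⊤ := by
    rw [← hrange]; exact bb.tot
  have hsubQ : ({t, u, v'} : Set Pt) ⊆ (↑P : Set Pt) \ {v} := by
    rintro x (rfl | rfl | rfl)
    · exact ⟨htP, htv⟩
    · exact ⟨huP, huv⟩
    · exact ⟨hv'P, hv'v⟩
  have hspanQ : affineSpan ℝ ((↑P : Set Pt) \ {v}) = ⊤ :=
    eq_top_iff.2 (hspan3 ▸ affineSpan_mono ℝ hsubQ)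
  have hspanP : affineSpan ℝ (↑P : Set Pt) = ⊤ :=
    eq_top_iff.2 (hspan3 ▸ affineSpan_mono ℝ (hsubQ.trans diff_subset))
  have hgpQ : GenPos ((↑P : Set Pt) \ {v}) := fun a b c ha hb hc' => hgp a b c ha.1 hb.1 hc'.1
  rw [← hrange, bb.interior_convexHull]
  intro i
  fin_cases i
  · -- coord of t : support line through u, v' in P \ {v}
    obtain ⟨h, hhu, hhv', hpos⟩ := support_line hgpQ hspanQ hc'.2.1
    refine coord_pos bb 0 h ?_ ?_ ?_
    · intro j hj
      fin_cases j
      · simp at hj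
      · exact hhu
      · exact hhv'
    · exact hpos t ⟨htP, htv⟩ htu htv'
    · exact hpos p ⟨hpP, hpv_ne⟩ hpune hpv'
  · -- coord of u : the hard case
    show 0 < bb.coord 1 p
    set f : Pt →ᵃ[ℝ] ℝ := bb.coord 1 with hfdef
    have hft : f t = 0 := by
      show bb.coord 1 (bb 0) = 0
      exact bb.coord_apply_ne (by decide)
    have hfu : f u = 1 := by
      show bb.coord 1 (bb 1) = 1
      exact bb.coord_apply_eq 1
    have hfv' : f v' = 0 := by
      show bb.coord 1 (bb 2) = 0
      exact bb.coord_apply_ne (by decide)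
    set C : Set Pt := (↑P : Set Pt) \ {u, v, p} with hCdef
    have htC : t ∈ C := ⟨htP, by simp [htu, htv, Ne.symm hpt]⟩
    have hv'C : v' ∈ C := ⟨hv'P, by simp [Ne.symm huv', hv'v, Ne.symm hpv']⟩
    have hCQ : C ⊆ (↑P : Set Pt) \ {v} :=
      fun q hq => ⟨hq.1, fun h => hq.2 (by simp only [mem_singleton_iff] at h; simp [h])⟩
    have hCne : C.Nonempty := ⟨t, htC⟩
    have hpQ : p ∈ convexHull ℝ (((↑P : Set Pt) \ {v}) \ {p}) := by
      by_contra h'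
      exact hnvQp ⟨⟨hpP, hpv_ne⟩, h'⟩
    have hset : ((↑P : Set Pt) \ {v}) \ {p} = insert u C := by
      ext q
      simp only [hCdef, mem_diff, mem_insert_iff, mem_singleton_iff]
      constructor
      · rintro ⟨⟨h1, h2⟩, h3⟩
        by_cases hqu : q = u
        · tauto
        · tauto
      · rintro (rfl | ⟨h1, h2⟩)
        · exact ⟨⟨huP, huv⟩, fun h => hpune h.symm⟩
        · tauto
    rw [hset, convexHull_insert hCne, mem_convexJoin] at hpQ
    obtain ⟨u0, hu0, y, hyC, hpy⟩ := hpQ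
    rw [mem_singleton_iff] at hu0
    rw [hu0] at hpy
    have hpnotC : p ∉ convexHull ℝ C := by
      intro hcon
      refine hpu.1.2 (convexHull_mono ?_ hcon)
      intro q hq
      exact ⟨⟨hq.1, fun h => hq.2 (by simp only [mem_singleton_iff] at h; simp [h])⟩,
        fun h => hq.2 (by simp only [mem_singleton_iff] at h; simp [h])⟩
    by_contra hle0
    push_neg at hle0
    have hfp_ne : f p ≠ 0 := by
      intro h0
      have hcol : Collinear ℝ ({t, v', p} : Set Pt) := by
        by_contra hncol
        have := vanish_of_triple hncol hft hfv' h0 u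
        rw [hfu] at this; norm_num at this
      exact hgp t v' p htP hv'P hpP htv' (Ne.symm hpv') (Ne.symm hpt) hcol
    have hfp : f p < 0 := lt_of_le_of_ne hle0 hfp_ne
    rw [segment_eq_image_lineMap] at hpy
    obtain ⟨a, haI, hpa⟩ := hpy
    have hfpa : f p = a * (f y - 1) + 1 := by
      rw [← hpa, f.apply_lineMap, AffineMap.lineMap_apply_module', hfu, smul_eq_mul]
    have hfy : f y < 0 := by
      by_contra hfy0
      push_neg at hfy0
      nlinarith [mul_nonneg haI.1 hfy0, haI.2]
    have h1fy : (0:ℝ) < 1 - f y := by linarith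
    obtain ⟨s, hsdef⟩ : ∃ s : ℝ, s = 1 / (1 - f y) := ⟨_, rfl⟩
    have hs0 : 0 < s := by rw [hsdef]; positivity
    have hs1 : s < 1 := by rw [hsdef, div_lt_one h1fy]; linarith
    obtain ⟨z, hzdef⟩ : ∃ z : Pt, z = AffineMap.lineMap u y s := ⟨_, rfl⟩
    have hfz : f z = 0 := by
      rw [hzdef, f.apply_lineMap, AffineMap.lineMap_apply_module', hfu, smul_eq_mul, hsdef]
      field_simp
      ring
    have hzQ : z ∈ convexHull ℝ ((↑P : Set Pt) \ {v}) := by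
      have hzseg : z ∈ segment ℝ u y := by
        rw [segment_eq_image_lineMap]
        exact ⟨s, ⟨hs0.le, hs1.le⟩, hzdef.symm⟩
      exact (convex_convexHull ℝ _).segment_subset
        (subset_convexHull ℝ ((↑P : Set Pt) \ {v}) ⟨huP, huv⟩) (convexHull_mono hCQ hyC) hzseg
    have has : s < a := by
      have h1 : a * (1 - f y) > 1 := by nlinarith
      have h2 : s * (1 - f y) = 1 := by rw [hsdef]; field_simp
      nlinarith
    have hpzy : p ∈ segment ℝ z y := by
      rw [segment_eq_image_lineMap]
      have h1s : (0:ℝ) < 1 - s := by linarith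
      have hcc : (a - s)/(1 - s) * (1 - s) = a - s := div_mul_cancel₀ _ h1s.ne'
      refine ⟨(a - s)/(1 - s), ⟨div_nonneg (by linarith) h1s.le, ?_⟩, ?_⟩
      · rw [div_le_one h1s]; linarith [haI.2]
      · rw [hzdef, AffineMap.lineMap_apply_module', AffineMap.lineMap_apply_module', ← hpa,
          AffineMap.lineMap_apply_module']
        match_scalars <;> field_simp [h1s.ne'] <;> ring
    obtain ⟨s', hzs'⟩ : ∃ s', z = AffineMap.lineMap t v' s' := by
      have hcol : Collinear ℝ ({t, v', z} : Set Pt) := by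
        by_contra hncol
        have := vanish_of_triple hncol hft hfv' hfz u
        rw [hfu] at this; norm_num at this
      rw [collinear_iff_of_mem (mem_insert t _)] at hcol
      obtain ⟨d, hd⟩ := hcol
      obtain ⟨r1, hr1⟩ := hd v' (by simp)
      obtain ⟨r2, hr2⟩ := hd z (by simp)
      have hr1ne : r1 ≠ 0 := by
        rintro rfl
        simp only [zero_smul, zero_vadd] at hr1
        exact htv' hr1.symm
      refine ⟨r2 / r1, ?_⟩
      rw [AffineMap.lineMap_apply_module', hr1, hr2]
      simp only [vadd_eq_add, add_sub_cancel_right, smul_smul]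
      rw [div_mul_cancel₀ _ hr1ne]
    rcases le_or_gt 0 s' with hs'0 | hs'neg
    · rcases le_or_gt s' 1 with hs'1 | hs'gt
      · -- z on segment [t, v'] ⊆ conv C, so p ∈ conv C, contradiction
        have hzseg : z ∈ segment ℝ t v' := by
          rw [segment_eq_image_lineMap]
          exact ⟨s', ⟨hs'0, hs'1⟩, hzs'.symm⟩
        have hzC : z ∈ convexHull ℝ C := segment_subset_convexHull htC hv'C hzseg
        exact hpnotC ((convex_convexHull ℝ C).segment_subset hzC hyC hpzy)
      · -- s' > 1 : contradict v' being a hull vertex of P \ {v}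
        have hEins : (↑P : Set Pt) \ {v} = insert v' (((↑P : Set Pt) \ {v}) \ {v'}) := by
          rw [Set.insert_diff_singleton]
          have hmm : v' ∈ (↑P : Set Pt) \ {v} := ⟨hv'P, hv'v⟩
          exact (Set.insert_eq_self.2 hmm).symm
        have huE : u ∈ ((↑P : Set Pt) \ {v}) \ {v'} := ⟨⟨huP, huv⟩, huv'⟩
        have huEne : (((↑P : Set Pt) \ {v}) \ {v'}).Nonempty := ⟨u, huE⟩
        rw [hEins, convexHull_insert huEne, mem_convexJoin] at hzQ
        obtain ⟨v0, hv0, w, hwE, hzw⟩ := hzQ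
        rw [mem_singleton_iff] at hv0
        rw [hv0] at hzw
        rw [segment_eq_image_lineMap] at hzw
        obtain ⟨β, hβI, hzβ⟩ := hzw
        have hs'ne : s' ≠ 0 := by linarith
        obtain ⟨δ, hδdef⟩ : ∃ d : ℝ, d = 1 / s' := ⟨_, rfl⟩
        have hδ0 : 0 < δ := by rw [hδdef]; exact div_pos one_pos (by linarith)
        have hδ1 : δ < 1 := by rw [hδdef, div_lt_one (by linarith)]; linarith
        have hv'eq : v' = δ • z + (1 - δ) • t := by
          rw [hzs', AffineMap.lineMap_apply_module', hδdef]
          match_scalars <;> field_simp [hs'ne] <;> ring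
        rw [← hzβ, AffineMap.lineMap_apply_module'] at hv'eq
        have hD : 0 < 1 - δ * (1 - β) := by nlinarith [hβI.1, hβI.2]
        have h2 : (1 - δ * (1 - β)) • v' = (δ * β) • w + (1 - δ) • t := by
          linear_combination (norm := module) hv'eq
        have hmem : v' ∈ segment ℝ w t := by
          refine ⟨δ * β / (1 - δ * (1 - β)), (1 - δ) / (1 - δ * (1 - β)),
            div_nonneg (mul_nonneg hδ0.le hβI.1) hD.le,
            div_nonneg (by linarith) hD.le, ?_, ?_⟩
          · rw [← add_div, div_eq_one_iff_eq hD.ne']; ring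
          · calc (δ * β / (1 - δ * (1 - β))) • w + ((1 - δ) / (1 - δ * (1 - β))) • t
                = (1 - δ * (1 - β))⁻¹ • ((δ * β) • w + (1 - δ) • t) := by module
              _ = (1 - δ * (1 - β))⁻¹ • ((1 - δ * (1 - β)) • v') := by rw [h2]
              _ = v' := by rw [smul_smul, inv_mul_cancel₀ hD.ne', one_smul]
        refine hvQ_v'.2 ((convex_convexHull ℝ (((↑P : Set Pt) \ {v}) \ {v'})).segment_subset
          (convexHull_mono (fun q hq => hq) hwE)
          (subset_convexHull ℝ (((↑P : Set Pt) \ {v}) \ {v'}) ⟨⟨htP, htv⟩, htv'⟩) hmem)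
    · -- s' < 0 : contradict t being a hull vertex of P
      have hQins : (↑P : Set Pt) \ {v} = insert t (((↑P : Set Pt) \ {v}) \ {t}) := by
        rw [Set.insert_diff_singleton]
        have hmm : t ∈ (↑P : Set Pt) \ {v} := ⟨htP, htv⟩
        exact (Set.insert_eq_self.2 hmm).symm
      have huD : u ∈ ((↑P : Set Pt) \ {v}) \ {t} := ⟨⟨huP, huv⟩, Ne.symm htu⟩
      have huDne : (((↑P : Set Pt) \ {v}) \ {t}).Nonempty := ⟨u, huD⟩
      rw [hQins, convexHull_insert huDne, mem_convexJoin] at hzQ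
      obtain ⟨t0, ht0, w, hwD, hzw⟩ := hzQ
      rw [mem_singleton_iff] at ht0
      rw [ht0] at hzw
      rw [segment_eq_image_lineMap] at hzw
      obtain ⟨β, hβI, hzβ⟩ := hzw
      obtain ⟨α, hαdef⟩ : ∃ d : ℝ, d = 1 / (1 - s') := ⟨_, rfl⟩
      have hα0 : 0 < α := by rw [hαdef]; exact div_pos one_pos (by linarith)
      have hα1 : α < 1 := by rw [hαdef, div_lt_one (by linarith)]; linarith
      have hteq : t = α • z + (1 - α) • v' := by
        have hs'1ne : (1:ℝ) - s' ≠ 0 := by linarith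
        rw [hzs', AffineMap.lineMap_apply_module', hαdef]
        match_scalars <;> field_simp [hs'1ne] <;> ring
      rw [← hzβ, AffineMap.lineMap_apply_module'] at hteq
      have hD : 0 < 1 - α * (1 - β) := by nlinarith [hβI.1, hβI.2]
      have h2 : (1 - α * (1 - β)) • t = (α * β) • w + (1 - α) • v' := by
        linear_combination (norm := module) hteq
      have hmem : t ∈ segment ℝ w v' := by
        refine ⟨α * β / (1 - α * (1 - β)), (1 - α) / (1 - α * (1 - β)),
          div_nonneg (mul_nonneg hα0.le hβI.1) hD.le,
          div_nonneg (by linarith) hD.le, ?_, ?_⟩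
        · rw [← add_div, div_eq_one_iff_eq hD.ne']; ring
        · calc (α * β / (1 - α * (1 - β))) • w + ((1 - α) / (1 - α * (1 - β))) • v'
              = (1 - α * (1 - β))⁻¹ • ((α * β) • w + (1 - α) • v') := by module
            _ = (1 - α * (1 - β))⁻¹ • ((1 - α * (1 - β)) • t) := by rw [h2]
            _ = t := by rw [smul_smul, inv_mul_cancel₀ hD.ne', one_smul]
      refine hvP_t.2 ((convex_convexHull ℝ ((↑P : Set Pt) \ {t})).segment_subset
        (convexHull_mono (fun q hq => show q ∈ (↑P : Set Pt) \ {t} from ⟨hq.1.1, hq.2⟩) hwD)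
        (subset_convexHull ℝ ((↑P : Set Pt) \ {t}) ⟨hv'P, Ne.symm htv'⟩) hmem)
  · -- coord of v' : support line through t, u in P
    obtain ⟨h, hht, hhu, hpos⟩ := support_line hgp hspanP hc.1
    refine coord_pos bb 2 h ?_ ?_ ?_
    · intro j hj
      fin_cases j
      · exact hht
      · exact hhu
      · simp at hj
    · exact hpos v' hv'P (Ne.symm htv') (Ne.symm huv')
    · exact hpos p hpP hpt hpune
end
end

section
/- Let P be a finite planar point set in general position, let u and v be distinct vertices of the convex hull of P, and let p be a point that is active for u but not active for v (with respect to P). Then after deleting v, p is active for u with respect to P \ {v}: p is a vertex of CH((P \ {v}) \ {u}) but not a vertex of CH(P \ {v}). -/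
open Set MeasureTheory

noncomputable section

theorem still_active (P : Finset Pt)
    (hgp : GenPos (↑P : Set Pt)) (u v p : Pt)
    (hu : IsHullVertex (↑P : Set Pt) u) (hv : IsHullVertex (↑P : Set Pt) v)
    (huv : u ≠ v)
    (hpu : ActiveFor (↑P : Set Pt) u p)
    (hpv : ¬ ActiveFor (↑P : Set Pt) v p) :
    ActiveFor ((↑P : Set Pt) \ {v}) u p := by
  obtain ⟨⟨hpmem, hpnot⟩, hnotP⟩ := hpu
  have hpP : p ∈ (↑P : Set Pt) := hpmem.1
  have hpu' : p ≠ u := hpmem.2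
  have hpv' : p ≠ v := by rintro rfl; exact hnotP hv
  refine ⟨⟨⟨⟨hpP, hpv'⟩, hpu'⟩, ?_⟩, ?_⟩
  · intro hc
    apply hpnot
    refine convexHull_mono ?_ hc
    rintro x ⟨⟨⟨hxP, hxv⟩, hxu⟩, hxp⟩
    exact ⟨⟨hxP, hxu⟩, hxp⟩
  · intro hvert
    exact hpv ⟨hvert, hnotP⟩
end
end

section
/- Consider any sequence of deletions (peeling process) on a set P of n points in the plane in general position, removing one point at a time until P is empty. At each stage, with S the current point set, say a point p 'becomes active for u' at that stage if p is active for the hull vertex u of S but was not active for u (or u was not a hull vertex) at the previous stage. Then the total number of (point, vertex) activation events over the entire process is at most 3n. -/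
open Set MeasureTheory

noncomputable section

/-- Hull vertices persist under taking subsets. -/
lemma vertex_persist {S T : Set Pt} (hTS : T ⊆ S) {p : Pt} (hp : p ∈ T)
    (h : IsHullVertex S p) : IsHullVertex T p :=
  ⟨hp, fun hc => h.2 (convexHull_mono (Set.diff_subset_diff_left hTS) hc)⟩

/-- Carathéodory in the plane: a point of the hull is in the hull of ≤ 3 points. -/
lemma carath {S : Set Pt} {p : Pt} (h : p ∈ convexHull ℝ S) :
    ∃ t : Finset Pt, ↑t ⊆ S ∧ t.card ≤ 3 ∧ p ∈ convexHull ℝ (↑t : Set Pt) := by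
  rw [convexHull_eq_union] at h
  simp only [Set.mem_iUnion] at h
  obtain ⟨t, ht, hai, hmem⟩ := h
  refine ⟨t, ht, ?_, hmem⟩
  have h1 := hai.card_le_finrank_succ
  have h2 : Module.finrank ℝ (vectorSpan ℝ (Set.range ((↑) : t → Pt))) ≤ 2 := by
    have := Submodule.finrank_le (vectorSpan ℝ (Set.range ((↑) : t → Pt)))
    simpa [finrank_euclideanSpace_fin] using this
  have h3 : Fintype.card t ≤ 3 := le_trans h1 (by omega)
  simpa [Fintype.card_coe] using h3

/-- Stage `i` point set of the peeling process. -/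
def Stg (P : Finset Pt) (f : ℕ → Pt) (i : ℕ) : Set Pt := (↑P : Set Pt) \ f '' Set.Iio i

lemma Stg_mono {P : Finset Pt} {f : ℕ → Pt} {i j : ℕ} (h : i ≤ j) :
    Stg P f j ⊆ Stg P f i :=
  Set.diff_subset_diff_right (Set.image_mono (f := f) (Set.Iio_subset_Iio h))

/-- `(u, p)` is active at stage `i` with `u` a hull vertex. -/
def Ev (P : Finset Pt) (f : ℕ → Pt) (i : ℕ) (u p : Pt) : Prop :=
  IsHullVertex (Stg P f i) u ∧ ActiveFor (Stg P f i) u p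

/-- Persistence of active pairs to later stages (as long as `p` is present and
not yet a hull vertex). -/
lemma ev_persist {P : Finset Pt} {f : ℕ → Pt} {i j : ℕ} {u p : Pt}
    (he : Ev P f i u p) (hij : i ≤ j) (hpj : p ∈ Stg P f j)
    (hpnv : ¬ IsHullVertex (Stg P f j) p) : Ev P f j u p := by
  obtain ⟨hvu, hap, hnp⟩ := he
  have hpmem : p ∈ Stg P f i \ {u} := hap.1
  have hpu : p ≠ u := hpmem.2
  -- u is still present at stage j
  have huj : u ∈ Stg P f j := by
    by_contra huj
    have huP : u ∈ (↑P : Set Pt) := hvu.1.1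
    have huim : u ∈ f '' Set.Iio j := by
      by_contra h; exact huj ⟨huP, h⟩
    obtain ⟨k, hk, hfk⟩ := huim
    have hik : i ≤ k := by
      by_contra h
      exact hvu.1.2 ⟨k, by simpa using Nat.lt_of_not_le h, hfk⟩
    -- after deleting u at step k, p is a hull vertex forever
    have hsub : Stg P f (k + 1) ⊆ Stg P f i \ {u} := by
      intro x hx
      refine ⟨Stg_mono (by omega) hx, ?_⟩
      intro hxu
      exact hx.2 ⟨k, by simp, by rw [hfk]; exact hxu.symm⟩
    have hpk1 : p ∈ Stg P f (k + 1) := Stg_mono (by simpa using hk) hpj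
    have hv1 : IsHullVertex (Stg P f (k + 1)) p := vertex_persist hsub hpk1 hap
    exact hpnv (vertex_persist (Stg_mono (by simpa using hk)) hpj hv1)
  refine ⟨vertex_persist (Stg_mono hij) huj hvu, ?_, hpnv⟩
  exact vertex_persist (Set.diff_subset_diff_left (Stg_mono hij)) ⟨hpj, hpu⟩ hap

theorem total_activations_le_three_n (P : Finset Pt) (n : ℕ) (hn : P.card = n)
    (hgp : GenPos (↑P : Set Pt)) (f : ℕ → Pt)
    (hmem : ∀ i < n, f i ∈ P)
    (hinj : Set.InjOn f (Set.Iio n))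
    (hsurj : ∀ p ∈ P, ∃ i < n, f i = p) :
    Set.ncard {e : ℕ × Pt × Pt |
        e.1 < n ∧
        IsHullVertex ((↑P : Set Pt) \ f '' Set.Iio e.1) e.2.1 ∧
        ActiveFor ((↑P : Set Pt) \ f '' Set.Iio e.1) e.2.1 e.2.2 ∧
        (e.1 = 0 ∨
          ¬ (IsHullVertex ((↑P : Set Pt) \ f '' Set.Iio (e.1 - 1)) e.2.1 ∧
             ActiveFor ((↑P : Set Pt) \ f '' Set.Iio (e.1 - 1)) e.2.1 e.2.2))} ≤
      3 * n := by
  classical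
  set E : Set (ℕ × Pt × Pt) := {e : ℕ × Pt × Pt |
        e.1 < n ∧
        IsHullVertex ((↑P : Set Pt) \ f '' Set.Iio e.1) e.2.1 ∧
        ActiveFor ((↑P : Set Pt) \ f '' Set.Iio e.1) e.2.1 e.2.2 ∧
        (e.1 = 0 ∨
          ¬ (IsHullVertex ((↑P : Set Pt) \ f '' Set.Iio (e.1 - 1)) e.2.1 ∧
             ActiveFor ((↑P : Set Pt) \ f '' Set.Iio (e.1 - 1)) e.2.1 e.2.2))} with hE
  have hStg : ∀ i, (↑P : Set Pt) \ f '' Set.Iio i = Stg P f i := fun _ => rfl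
  -- basic membership facts for events
  have hEev : ∀ e ∈ E, Ev P f e.1 e.2.1 e.2.2 := fun e he => ⟨he.2.1, he.2.2.1⟩
  have hEp : ∀ e ∈ E, e.2.2 ∈ P := by
    intro e he
    have := (hEev e he).2.1.1.1
    exact this.1
  have hEu : ∀ e ∈ E, e.2.1 ∈ P := fun e he => (hEev e he).1.1.1
  -- E is finite
  have hfin : E.Finite := by
    apply Set.Finite.subset (((Set.finite_Iio n)).prod
      ((P.finite_toSet).prod P.finite_toSet))
    intro e he
    exact ⟨he.1, hEu e he, hEp e he⟩
  rw [Set.ncard_eq_toFinset_card _ hfin]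
  set F : Finset (ℕ × Pt × Pt) := hfin.toFinset with hF
  have hFE : ∀ e, e ∈ F ↔ e ∈ E := fun e => hfin.mem_toFinset
  have hcardsum : F.card = ∑ p ∈ P, (F.filter fun e => e.2.2 = p).card :=
    Finset.card_eq_sum_card_fiberwise (fun e he => hEp e ((hFE e).1 he))
  rw [hcardsum, ← hn]
  calc ∑ p ∈ P, (F.filter fun e => e.2.2 = p).card
      ≤ ∑ _p ∈ P, 3 := by
        apply Finset.sum_le_sum
        intro p hp
        set fib := F.filter (fun e => e.2.2 = p) with hfib
        rcases fib.eq_empty_or_nonempty with hemp | hne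
        · simp [hemp]
        -- take the maximal stage among events in the fiber
        have hne' : (fib.image Prod.fst).Nonempty := hne.image _
        set m := (fib.image Prod.fst).max' hne' with hm
        obtain ⟨e0, he0fib, he0m⟩ := Finset.mem_image.1 ((fib.image Prod.fst).max'_mem hne')
        have he0E : e0 ∈ E := (hFE e0).1 (Finset.mem_filter.1 he0fib).1
        have he0p : e0.2.2 = p := (Finset.mem_filter.1 he0fib).2
        have hevm : Ev P f m e0.2.1 p := by
          rw [← he0p, hm, ← he0m]; exact hEev e0 he0E
        have hpSm : p ∈ Stg P f m := hevm.2.1.1.1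
        have hpnv : ¬ IsHullVertex (Stg P f m) p := hevm.2.2
        have hphull : p ∈ convexHull ℝ (Stg P f m \ {p}) := by
          by_contra h; exact hpnv ⟨hpSm, h⟩
        obtain ⟨t, htsub, htcard, htmem⟩ := carath hphull
        -- every event in the fiber has its vertex in t
        have hmaps : ∀ e ∈ fib, e.2.1 ∈ t := by
          intro e hefib
          have heE : e ∈ E := (hFE e).1 (Finset.mem_filter.1 hefib).1
          have hep : e.2.2 = p := (Finset.mem_filter.1 hefib).2
          have hev : Ev P f e.1 e.2.1 p := by rw [← hep]; exact hEev e heE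
          have him : e.1 ≤ m :=
            Finset.le_max' _ _ (Finset.mem_image.2 ⟨e, hefib, rfl⟩)
          have hevm' : Ev P f m e.2.1 p := ev_persist hev him hpSm hpnv
          by_contra hut
          have : (↑t : Set Pt) ⊆ (Stg P f m \ {e.2.1}) \ {p} := by
            intro x hx
            refine ⟨⟨(htsub hx).1, fun hxu => ?_⟩, (htsub hx).2⟩
            rw [Set.mem_singleton_iff] at hxu
            exact hut (by simpa [hxu] using hx)
          exact hevm'.2.1.2 (convexHull_mono this htmem)
        -- distinct events in the fiber have distinct vertices
        have hinjfib : Set.InjOn (fun e : ℕ × Pt × Pt => e.2.1) ↑fib := by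
          intro e he e' he' huv
          simp only at huv
          have hef : e ∈ fib := Finset.mem_coe.1 he
          have he'f : e' ∈ fib := Finset.mem_coe.1 he'
          have heE : e ∈ E := (hFE e).1 (Finset.mem_filter.1 hef).1
          have he'E : e' ∈ E := (hFE e').1 (Finset.mem_filter.1 he'f).1
          have hep : e.2.2 = p := (Finset.mem_filter.1 hef).2
          have he'p : e'.2.2 = p := (Finset.mem_filter.1 he'f).2
          -- first show the stages are equal
          have key : ∀ a b : ℕ × Pt × Pt, a ∈ E → b ∈ E → a.2.2 = p → b.2.2 = p →
              a.2.1 = b.2.1 → a.1 < b.1 → False := by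
            intro a b haE hbE hap hbp hab hlt
            have heva : Ev P f a.1 b.2.1 p := by
              rw [← hab, ← hap]; exact hEev a haE
            have hevb : Ev P f b.1 b.2.1 p := by rw [← hbp]; exact hEev b hbE
            have hb0 : b.1 ≠ 0 := by omega
            have hnew : ¬ (IsHullVertex (Stg P f (b.1 - 1)) b.2.1 ∧
                ActiveFor (Stg P f (b.1 - 1)) b.2.1 p) := by
              rcases hbE.2.2.2 with h | h
              · exact absurd h hb0
              · rw [hStg, hbp] at h; exact h
            have hpb : p ∈ Stg P f b.1 := hevb.2.1.1.1
            have hpb1 : p ∈ Stg P f (b.1 - 1) := Stg_mono (by omega) hpb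
            have hpnvb1 : ¬ IsHullVertex (Stg P f (b.1 - 1)) p := by
              intro h
              exact hevb.2.2 (vertex_persist (Stg_mono (by omega)) hpb h)
            have := ev_persist heva (by omega) hpb1 hpnvb1
            exact hnew ⟨this.1, this.2.1, this.2.2⟩
          have hstage : e.1 = e'.1 := by
            rcases lt_trichotomy e.1 e'.1 with h | h | h
            · exact absurd (key e e' heE he'E hep he'p huv h) (not_false)
            · exact h
            · exact absurd (key e' e he'E heE he'p hep huv.symm h) (not_false)
          have h2 : e.2 = e'.2 := Prod.ext huv (by rw [hep, he'p])
          exact Prod.ext hstage h2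
        calc fib.card ≤ t.card := Finset.card_le_card_of_injOn _ hmaps hinjfib
          _ ≤ 3 := htcard
    _ = 3 * P.card := by simp [Finset.sum_const, mul_comm]
end
end
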